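/- arXiv:2112.14421 — 4 statements merged into one kernel-verified Lean document; each statement's English description precedes it below -/
import Mathlib

section
/- For any finite hypergraph $H$ of rank $d \geq 2$, the matching number satisfies $\nu(H) \geq \nu^*(H)/(d-1+\tfrac{1}{d})$. -/
open Finset

section FurediAux

variable {α : Type*} [DecidableEq α]

/-- Small perturbation helper: finitely many affine conditions positive at 0 stay
nonnegative in a small interval. -/
private lemma eps_helper {ι : Type*} (s : Finset ι) (a b : ι → ℝ)
    (ha : ∀ i ∈ s, 0 < a i) :
    ∃ ε : ℝ, 0 < ε ∧ ∀ t : ℝ, |t| ≤ ε → ∀ i ∈ s, 0 ≤ a i + t * b i := by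
  classical
  induction s using Finset.induction_on with
  | empty => exact ⟨1, one_pos, by simp⟩
  | @insert i s his ih =>
    obtain ⟨ε, hε, hall⟩ := ih fun j hj => ha j (mem_insert_of_mem hj)
    have hai : 0 < a i := ha i (mem_insert_self i s)
    have hbi : (0:ℝ) < |b i| + 1 := by positivity
    refine ⟨min ε (a i / (|b i| + 1)), lt_min hε (div_pos hai hbi), ?_⟩
    intro t ht j hj
    rcases mem_insert.mp hj with rfl | hj
    · have h1 : |t| ≤ a j / (|b j| + 1) := le_trans ht (min_le_right _ _)
      have h2 : t * b j ≤ |t * b j| := le_abs_self _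
      have h3 : -(t * b j) ≤ |t * b j| := neg_le_abs _
      have h4 : |t * b j| = |t| * |b j| := abs_mul _ _
      have h5 : |t| * |b j| ≤ (a j / (|b j| + 1)) * (|b j| + 1) := by
        apply mul_le_mul h1 (by linarith [le_abs_self (b j)]) (abs_nonneg _)
        positivity
      have h6 : (a j / (|b j| + 1)) * (|b j| + 1) = a j := by
        field_simp
      nlinarith [abs_nonneg t, abs_nonneg (b j)]
    · exact hall t (le_trans ht (min_le_left _ _)) j hj

/-- The load of a weight function `g` (indexed by the edges of `E`) at a vertex `v`. -/
noncomputable def eload (E : Finset (Finset α)) (g : {e // e ∈ E} → ℝ) (v : α) : ℝ :=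
  ∑ e : {e // e ∈ E}, if v ∈ (e : Finset α) then g e else 0

lemma eload_restrict (E : Finset (Finset α)) (G : Finset α → ℝ) (v : α) :
    eload E (fun e => G ↑e) v = ∑ e ∈ E.filter (fun e => v ∈ e), G e := by
  classical
  rw [Finset.sum_filter, eload]
  exact Finset.sum_coe_sort E (fun e => if v ∈ e then G e else 0)

lemma eload_add (E : Finset (Finset α)) (g h : {e // e ∈ E} → ℝ) (v : α) :
    eload E (g + h) v = eload E g v + eload E h v := by
  classical
  rw [eload, eload, eload, ← Finset.sum_add_distrib]
  refine Finset.sum_congr rfl fun e _ => ?_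
  by_cases hv : v ∈ (e : Finset α) <;> simp [hv]

lemma eload_smul (E : Finset (Finset α)) (t : ℝ) (g : {e // e ∈ E} → ℝ) (v : α) :
    eload E (t • g) v = t * eload E g v := by
  classical
  rw [eload, eload, Finset.mul_sum]
  refine Finset.sum_congr rfl fun e _ => ?_
  by_cases hv : v ∈ (e : Finset α) <;> simp [hv]

lemma eload_continuous (E : Finset (Finset α)) (v : α) :
    Continuous (fun g : {e // e ∈ E} → ℝ => eload E g v) := by
  classical
  apply continuous_finset_sum
  intro e _
  by_cases hv : v ∈ (e : Finset α)
  · simpa [hv] using continuous_apply e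
  · simpa [hv] using (continuous_const : Continuous fun _ : {e // e ∈ E} → ℝ => (0:ℝ))

end FurediAux

section ExistsGood

variable {α : Type*} [DecidableEq α]

/-- Key lemma: there is a fractional matching `g` dominating the total weight of `f`,
such that either some edge has weight `0`, or some edge has weight at least `1/d`. -/
lemma exists_good (V : Finset α) (E : Finset (Finset α)) (d : ℕ) (hd : 2 ≤ d)
    (hE : ∀ e ∈ E, e ⊆ V ∧ e.Nonempty ∧ e.card ≤ d) (hEne : E.Nonempty)
    (f : Finset α → ℝ) (hf0 : ∀ e ∈ E, 0 ≤ f e)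
    (hfm : ∀ v ∈ V, ∑ e ∈ E.filter (fun e => v ∈ e), f e ≤ 1) :
    ∃ g : Finset α → ℝ, (∀ e ∈ E, 0 ≤ g e) ∧
      (∀ v ∈ V, ∑ e ∈ E.filter (fun e => v ∈ e), g e ≤ 1) ∧
      (∑ e ∈ E, f e ≤ ∑ e ∈ E, g e) ∧
      ((∃ e ∈ E, g e = 0) ∨ ∃ e ∈ E, 1 / (d:ℝ) ≤ g e) := by
  classical
  have hd0 : (0:ℝ) < d := by positivity
  -- the fractional matching polytope
  set P : Set ({e // e ∈ E} → ℝ) := {p | (∀ e : {e // e ∈ E}, 0 ≤ p e) ∧ ∀ v ∈ V, eload E p v ≤ 1} with hP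
  -- P is closed
  have hPclosed : IsClosed P := by
    have : P = (⋂ e : {e // e ∈ E}, {p : {e // e ∈ E} → ℝ | 0 ≤ p e}) ∩ (⋂ v ∈ V, {p : {e // e ∈ E} → ℝ | eload E p v ≤ 1}) := by
      ext p
      simp only [hP, Set.mem_setOf_eq, Set.mem_inter_iff, Set.mem_iInter]
    rw [this]
    exact IsClosed.inter
      (isClosed_iInter fun e => isClosed_le continuous_const (continuous_apply e))
      (isClosed_biInter fun v _ => isClosed_le (eload_continuous E v) continuous_const)
  -- P is contained in the cube [0,1]^{e // e ∈ E}
  have hPK : P ⊆ Set.univ.pi (fun _ : {e // e ∈ E} => Set.Icc (0:ℝ) 1) := by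
    intro p hp
    rw [Set.mem_univ_pi]
    intro e
    obtain ⟨v, hv⟩ := (hE e e.2).2.1
    have hvV : v ∈ V := (hE e e.2).1 hv
    have h1 : p e ≤ eload E p v := by
      have := Finset.single_le_sum (f := fun e' : {e // e ∈ E} => if v ∈ (e' : Finset α) then p e' else 0)
        (fun e' _ => by by_cases h : v ∈ (e' : Finset α) <;> simp [h, hp.1 e'])
        (Finset.mem_univ e)
      simpa [eload, if_pos hv] using this
    exact ⟨hp.1 e, le_trans h1 (hp.2 v hvV)⟩
  have hPcomp : IsCompact P :=
    (isCompact_univ_pi fun _ => isCompact_Icc).of_isClosed_subset hPclosed hPK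
  -- f restricted is in P
  have hfP : (fun e : {e // e ∈ E} => f ↑e) ∈ P := by
    constructor
    · exact fun e => hf0 _ e.2
    · intro v hv
      rw [eload_restrict E f v]
      exact hfm v hv
  -- maximize the total weight over P
  have hsumcont : Continuous (fun p : {e // e ∈ E} → ℝ => ∑ e : {e // e ∈ E}, p e) :=
    continuous_finset_sum _ fun e _ => continuous_apply e
  obtain ⟨g0, hg0P, hg0max⟩ := hPcomp.exists_isMaxOn ⟨_, hfP⟩ hsumcont.continuousOn
  set ν : ℝ := ∑ e : {e // e ∈ E}, g0 e with hν
  -- the optimal face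
  set S := P ∩ {p | ∑ e : {e // e ∈ E}, p e = ν} with hS
  have hScomp : IsCompact S :=
    hPcomp.of_isClosed_subset (hPclosed.inter (isClosed_eq hsumcont continuous_const))
      Set.inter_subset_left
  obtain ⟨g, hgext⟩ := hScomp.extremePoints_nonempty ⟨g0, hg0P, rfl⟩
  have hgS : g ∈ S := hgext.1
  have hgP : g ∈ P := hgS.1
  have hgsum : ∑ e : {e // e ∈ E}, g e = ν := hgS.2
  -- the function on Finset α
  set G : Finset α → ℝ := fun s => if h : s ∈ E then g ⟨s, h⟩ else 0 with hG
  have hGg : ∀ e : {e // e ∈ E}, G ↑e = g e := by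
    intro e
    simp only [hG, dif_pos e.2]
  have hGrest : (fun e : {e // e ∈ E} => G ↑e) = g := funext hGg
  have hGmem : ∀ e (he : e ∈ E), G e = g ⟨e, he⟩ := fun e he => dif_pos he
  have hG0 : ∀ e ∈ E, 0 ≤ G e := fun e he => by rw [hGmem e he]; exact hgP.1 _
  have hGload : ∀ v ∈ V, ∑ e ∈ E.filter (fun e => v ∈ e), G e ≤ 1 := by
    intro v hv
    rw [← eload_restrict E G v, hGrest]
    exact hgP.2 v hv
  have hGsum : ∑ e ∈ E, f e ≤ ∑ e ∈ E, G e := by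
    have h1 : ∑ e ∈ E, f e = ∑ e : {e // e ∈ E}, f ↑e := (Finset.sum_coe_sort E f).symm
    have h2 : ∑ e ∈ E, G e = ∑ e : {e // e ∈ E}, G ↑e := (Finset.sum_coe_sort E G).symm
    rw [h1, h2, hGrest, hgsum]
    exact hg0max hfP
  refine ⟨G, hG0, hGload, hGsum, ?_⟩
  by_cases hz : ∃ e ∈ E, G e = 0
  · exact Or.inl hz
  right
  push_neg at hz
  have hgpos : ∀ e : {e // e ∈ E}, 0 < g e := by
    intro e
    rcases lt_or_eq_of_le (hgP.1 e) with h | h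
    · exact h
    · exact absurd ((hGg e).trans h.symm) (hz ↑e e.2)
  by_contra hsmall
  push_neg at hsmall
  -- all weights are < 1/d; derive a contradiction
  set T : Finset α := V.filter (fun v => eload E g v = 1) with hT
  -- key independence property from extremality
  have key : ∀ h : {e // e ∈ E} → ℝ, (∀ v ∈ T, eload E h v = 0) → h = 0 := by
    intro h hh
    by_contra hne0
    -- find ε such that g ± t h stays in P for |t| ≤ ε
    obtain ⟨ε₁, hε₁, hall₁⟩ := eps_helper (Finset.univ : Finset {e // e ∈ E}) (fun e => g e) h
      (fun e _ => hgpos e)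
    obtain ⟨ε₂, hε₂, hall₂⟩ := eps_helper (V.filter (fun v => eload E g v ≠ 1))
      (fun v => 1 - eload E g v) (fun v => - eload E h v)
      (fun v hv => by
        rw [Finset.mem_filter] at hv
        have h1 := hgP.2 v hv.1
        have h2 := lt_of_le_of_ne h1 hv.2
        show (0:ℝ) < 1 - eload E g v
        linarith)
    set ε : ℝ := min ε₁ ε₂ with hε
    have hεpos : 0 < ε := lt_min hε₁ hε₂
    have feas : ∀ t : ℝ, |t| ≤ ε → g + t • h ∈ P := by
      intro t ht
      constructor
      · intro e
        have := hall₁ t (le_trans ht (min_le_left _ _)) e (Finset.mem_univ e)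
        simpa using this
      · intro v hv
        rw [eload_add, eload_smul]
        by_cases hvt : eload E g v = 1
        · have hvT : v ∈ T := Finset.mem_filter.mpr ⟨hv, hvt⟩
          rw [hh v hvT]
          simp [hvt]
        · have hvf : v ∈ V.filter (fun v => eload E g v ≠ 1) :=
            Finset.mem_filter.mpr ⟨hv, hvt⟩
          have := hall₂ t (le_trans ht (min_le_right _ _)) v hvf
          linarith
    have hsum_lin : ∀ t : ℝ, ∑ e : {e // e ∈ E}, (g + t • h) e = ν + t * ∑ e : {e // e ∈ E}, h e := by
      intro t
      simp only [Pi.add_apply, Pi.smul_apply, smul_eq_mul]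
      rw [Finset.sum_add_distrib, ← Finset.mul_sum, hgsum]
    have hsum0 : ∑ e : {e // e ∈ E}, h e = 0 := by
      by_contra hs
      set t : ℝ := if 0 < (∑ e : {e // e ∈ E}, h e) then ε else -ε with htd
      have htabs : |t| ≤ ε := by
        rw [htd]
        split <;> simp [abs_of_pos hεpos, le_of_lt hεpos]
      have hpos : 0 < t * ∑ e : {e // e ∈ E}, h e := by
        rw [htd]
        split_ifs with hcase
        · exact mul_pos hεpos hcase
        · have : ∑ e : {e // e ∈ E}, h e < 0 := lt_of_le_of_ne (not_lt.mp hcase) hs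
          exact mul_pos_of_neg_of_neg (by linarith) this
      have hmem := feas t htabs
      have h9 : ∑ e : {e // e ∈ E}, (g + t • h) e ≤ ν := hg0max hmem
      rw [hsum_lin t] at h9
      linarith
    -- g is the midpoint of two points of S
    have hx₁ : g + ε • h ∈ S := by
      refine ⟨feas ε (by rw [abs_of_pos hεpos]), ?_⟩
      rw [Set.mem_setOf_eq, hsum_lin ε, hsum0, mul_zero, add_zero]
    have hx₂ : g + (-ε) • h ∈ S := by
      refine ⟨feas (-ε) (by rw [abs_neg, abs_of_pos hεpos]), ?_⟩
      rw [Set.mem_setOf_eq, hsum_lin (-ε), hsum0, mul_zero, add_zero]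
    have hseg : g ∈ openSegment ℝ (g + ε • h) (g + (-ε) • h) := by
      refine ⟨1/2, 1/2, by norm_num, by norm_num, by norm_num, ?_⟩
      funext e
      simp only [Pi.add_apply, Pi.smul_apply, smul_eq_mul, Pi.neg_apply]
      ring
    rw [mem_extremePoints] at hgext
    have := (hgext.2 _ hx₁ _ hx₂ hseg).1
    have hεh : ε • h = 0 := by
      have := congrArg (fun x => x - g) this
      simpa [add_sub_cancel_left] using this
    have : h = 0 := by
      rcases smul_eq_zero.mp hεh with h' | h'
      · exact absurd h' (ne_of_gt hεpos)
      · exact h'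
    exact hne0 this
  -- build the injective linear map to functions on tight vertices
  have hcard : E.card ≤ T.card := by
    set Φ : ({e // e ∈ E} → ℝ) →ₗ[ℝ] ({v // v ∈ T} → ℝ) :=
      { toFun := fun h v => eload E h ↑v
        map_add' := fun x y => by funext v; exact eload_add E x y ↑v
        map_smul' := fun t x => by funext v; exact eload_smul E t x ↑v } with hΦ
    have hinj : Function.Injective Φ := by
      rw [← LinearMap.ker_eq_bot]
      rw [Submodule.eq_bot_iff]
      intro h hmem
      apply key
      intro v hv
      have := congrFun hmem ⟨v, hv⟩
      exact this
    have := LinearMap.finrank_le_finrank_of_injective hinj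
    rwa [Module.finrank_pi, Module.finrank_pi, Fintype.card_coe, Fintype.card_coe] at this
  -- each tight vertex has degree at least d + 1
  have hdeg : ∀ v ∈ T, d + 1 ≤ (E.filter (fun e => v ∈ e)).card := by
    intro v hv
    rw [Finset.mem_filter] at hv
    have hload : ∑ e ∈ E.filter (fun e => v ∈ e), G e = 1 := by
      rw [← eload_restrict E G v, hGrest]; exact hv.2
    have hne : (E.filter (fun e => v ∈ e)).Nonempty := by
      by_contra hcon
      rw [Finset.not_nonempty_iff_eq_empty] at hcon
      rw [hcon] at hload
      simp at hload
    have hlt : (1:ℝ) < (E.filter (fun e => v ∈ e)).card * (1/d) := by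
      calc (1:ℝ) = ∑ e ∈ E.filter (fun e => v ∈ e), G e := hload.symm
        _ < ∑ _e ∈ E.filter (fun e => v ∈ e), (1/(d:ℝ)) := by
            apply Finset.sum_lt_sum_of_nonempty hne
            intro e he
            exact hsmall e (Finset.mem_of_mem_filter e he)
        _ = (E.filter (fun e => v ∈ e)).card * (1/d) := by
            rw [Finset.sum_const, nsmul_eq_mul]
    have : (d:ℝ) < (E.filter (fun e => v ∈ e)).card := by
      rw [mul_one_div] at hlt
      rw [lt_div_iff₀ hd0, one_mul] at hlt
      linarith
    exact_mod_cast Nat.succ_le_of_lt (by exact_mod_cast this)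
  -- incidence counting contradiction
  have hinc : ∑ v ∈ T, (E.filter (fun e => v ∈ e)).card = ∑ e ∈ E, (T.filter (fun v => v ∈ e)).card := by
    simp only [Finset.card_filter]
    exact Finset.sum_comm
  have hub : ∑ e ∈ E, (T.filter (fun v => v ∈ e)).card ≤ E.card * d := by
    calc ∑ e ∈ E, (T.filter (fun v => v ∈ e)).card
        ≤ ∑ _e ∈ E, d := by
          apply Finset.sum_le_sum
          intro e he
          exact le_trans
            (Finset.card_le_card (fun v hv => (Finset.mem_filter.mp hv).2))
            (hE e he).2.2
      _ = E.card * d := by rw [Finset.sum_const, smul_eq_mul]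
  have hlb : T.card * (d + 1) ≤ ∑ v ∈ T, (E.filter (fun e => v ∈ e)).card := by
    calc T.card * (d + 1) = ∑ _v ∈ T, (d + 1) := by rw [Finset.sum_const, smul_eq_mul]
      _ ≤ ∑ v ∈ T, (E.filter (fun e => v ∈ e)).card := Finset.sum_le_sum hdeg
  have hEcard : 1 ≤ E.card := Finset.card_pos.mpr hEne
  have hchain : T.card * (d + 1) ≤ T.card * d := by
    calc T.card * (d + 1) ≤ ∑ v ∈ T, (E.filter (fun e => v ∈ e)).card := hlb
      _ = ∑ e ∈ E, (T.filter (fun v => v ∈ e)).card := hinc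
      _ ≤ E.card * d := hub
      _ ≤ T.card * d := Nat.mul_le_mul_right d hcard
  rw [Nat.mul_succ] at hchain
  have hT0 : T.card = 0 := by omega
  rw [hT0] at hcard
  omega

end ExistsGood

section Induction

variable {α : Type*} [DecidableEq α]

private lemma bound_num (d : ℕ) (hd : 2 ≤ d) (m : ℕ) (hm1 : 1 ≤ m) (hmd : m ≤ d)
    (t : ℝ) (ht : 1 / (d:ℝ) ≤ t) :
    (m:ℝ) - ((m:ℝ) - 1) * t ≤ (d:ℝ) - 1 + 1 / d := by
  have hd0 : (0:ℝ) < d := by positivity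
  have hm1' : (1:ℝ) ≤ (m:ℝ) := by exact_mod_cast hm1
  have hmd' : (m:ℝ) ≤ (d:ℝ) := by exact_mod_cast hmd
  have h1 : (m:ℝ) - ((m:ℝ) - 1) * t ≤ (m:ℝ) - ((m:ℝ) - 1) * (1 / d) := by
    have := mul_le_mul_of_nonneg_left ht (by linarith : (0:ℝ) ≤ (m:ℝ) - 1)
    linarith
  have hinv : (0:ℝ) < 1 / d := by positivity
  have hinv1 : (1:ℝ) / d ≤ 1 := by
    rw [div_le_one hd0]
    linarith
  have h2 : (m:ℝ) - ((m:ℝ) - 1) * (1 / d) ≤ (d:ℝ) - ((d:ℝ) - 1) * (1 / d) := by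
    nlinarith
  have h3 : (d:ℝ) - ((d:ℝ) - 1) * (1 / d) = (d:ℝ) - 1 + 1 / d := by
    field_simp
    ring
  linarith

/-- Induction on the number of edges: the key quantitative lemma. -/
lemma furedi_aux (V : Finset α) (d : ℕ) (hd : 2 ≤ d) :
    ∀ n : ℕ, ∀ E : Finset (Finset α), E.card ≤ n →
    (∀ e ∈ E, e ⊆ V ∧ e.Nonempty ∧ e.card ≤ d) →
    ∀ f : Finset α → ℝ, (∀ e ∈ E, 0 ≤ f e) →
    (∀ v ∈ V, ∑ e ∈ E.filter (fun e => v ∈ e), f e ≤ 1) →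
    ∃ M : Finset (Finset α), M ⊆ E ∧
      (↑M : Set (Finset α)).Pairwise (fun a b => Disjoint a b) ∧
      ∑ e ∈ E, f e ≤ ((d:ℝ) - 1 + 1 / d) * M.card := by
  classical
  intro n
  induction n with
  | zero =>
    intro E hcard _ f _ _
    have hE0 : E = ∅ := Finset.card_eq_zero.mp (Nat.le_zero.mp hcard)
    subst hE0
    exact ⟨∅, Finset.empty_subset _, by simp, by simp⟩
  | succ n ih =>
    intro E hcard hE f hf0 hfm
    rcases E.eq_empty_or_nonempty with rfl | hEne
    · exact ⟨∅, Finset.empty_subset _, by simp, by simp⟩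
    obtain ⟨g, hg0, hgm, hgsum, hcase⟩ := exists_good V E d hd hE hEne f hf0 hfm
    have hd0 : (0:ℝ) < d := by positivity
    rcases hcase with ⟨e0, he0, hge0⟩ | ⟨estar, hes, hges⟩
    · -- an edge of weight zero: drop it
      set E₂ := E.erase e0 with hE₂
      have hsub : E₂ ⊆ E := Finset.erase_subset _ _
      have hcard₂ : E₂.card ≤ n := by
        rw [hE₂, Finset.card_erase_of_mem he0]
        omega
      obtain ⟨M, hME, hMd, hMb⟩ := ih E₂ hcard₂ (fun e he => hE e (hsub he)) g
        (fun e he => hg0 e (hsub he))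
        (fun v hv => le_trans (Finset.sum_le_sum_of_subset_of_nonneg
          (Finset.filter_subset_filter _ hsub)
          (fun e he _ => hg0 e (Finset.mem_of_mem_filter e he))) (hgm v hv))
      refine ⟨M, le_trans hME hsub, hMd, ?_⟩
      have h1 : ∑ e ∈ E₂, g e + g e0 = ∑ e ∈ E, g e := Finset.sum_erase_add E g he0
      calc ∑ e ∈ E, f e ≤ ∑ e ∈ E, g e := hgsum
        _ = ∑ e ∈ E₂, g e := by rw [← h1, hge0, add_zero]
        _ ≤ ((d:ℝ) - 1 + 1 / d) * M.card := hMb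
    · -- an edge of weight at least 1/d: put it in the matching
      have hestar := hE estar hes
      have hesne : estar.Nonempty := hestar.2.1
      set E₂ := E.filter (fun e => Disjoint e estar) with hE₂
      have hsub : E₂ ⊆ E := Finset.filter_subset _ _
      have hesnot : estar ∉ E₂ := by
        rw [hE₂, Finset.mem_filter]
        rintro ⟨-, hdis⟩
        rw [Finset.disjoint_self_iff_empty] at hdis
        exact hesne.ne_empty hdis
      have hcard₂ : E₂.card ≤ n := by
        have h1 : E₂ ⊆ E.erase estar := by
          intro e he
          rw [Finset.mem_erase]
          refine ⟨?_, hsub he⟩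
          rintro rfl
          exact hesnot he
        have := Finset.card_le_card h1
        rw [Finset.card_erase_of_mem hes] at this
        omega
      obtain ⟨M', hME, hMd, hMb⟩ := ih E₂ hcard₂ (fun e he => hE e (hsub he)) g
        (fun e he => hg0 e (hsub he))
        (fun v hv => le_trans (Finset.sum_le_sum_of_subset_of_nonneg
          (Finset.filter_subset_filter _ hsub)
          (fun e he _ => hg0 e (Finset.mem_of_mem_filter e he))) (hgm v hv))
      set M := insert estar M' with hM
      have hesnotM : estar ∉ M' := fun h => hesnot (hME h)
      have hMsub : M ⊆ E := Finset.insert_subset hes (le_trans hME hsub)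
      have hMcard : M.card = M'.card + 1 := Finset.card_insert_of_notMem hesnotM
      have hMdisj : (↑M : Set (Finset α)).Pairwise (fun a b => Disjoint a b) := by
        rw [hM, Finset.coe_insert,
          Set.pairwise_insert_of_symmetric]
        refine ⟨hMd, ?_⟩
        intro b hb _
        have := hME hb
        rw [hE₂, Finset.mem_filter] at this
        exact (this.2).symm
      -- bound the weight of edges meeting estar
      set D := E.filter (fun e => ¬ Disjoint e estar) with hD
      have hesD : estar ∈ D := by
        rw [hD, Finset.mem_filter]
        refine ⟨hes, ?_⟩
        rw [Finset.disjoint_self_iff_empty]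
        exact hesne.ne_empty
      have hsplit : ∑ e ∈ E₂, g e + ∑ e ∈ D, g e = ∑ e ∈ E, g e :=
        Finset.sum_filter_add_sum_filter_not E _ g
      have hDle : ∑ e ∈ D, g e ≤ (d:ℝ) - 1 + 1 / d := by
        set c : Finset α → ℝ := fun e => ((estar.filter (fun v => v ∈ e)).card : ℝ) with hc
        have hA1 : ∑ v ∈ estar, ∑ e ∈ E.filter (fun e => v ∈ e), g e ≤ (estar.card : ℝ) := by
          calc ∑ v ∈ estar, ∑ e ∈ E.filter (fun e => v ∈ e), g e
              ≤ ∑ _v ∈ estar, (1:ℝ) := by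
                apply Finset.sum_le_sum
                intro v hv
                exact hgm v (hestar.1 hv)
            _ = (estar.card : ℝ) := by rw [Finset.sum_const, nsmul_eq_mul, mul_one]
        have hA2 : ∑ v ∈ estar, ∑ e ∈ E.filter (fun e => v ∈ e), g e
            = ∑ e ∈ E, c e * g e := by
          have h1 : ∀ v ∈ estar, ∑ e ∈ E.filter (fun e => v ∈ e), g e
              = ∑ e ∈ E, if v ∈ e then g e else 0 := fun v _ => Finset.sum_filter _ _
          rw [Finset.sum_congr rfl h1, Finset.sum_comm]
          apply Finset.sum_congr rfl
          intro e _
          rw [← Finset.sum_filter, Finset.sum_const, nsmul_eq_mul]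
        have hA3 : ∑ e ∈ D, c e * g e ≤ ∑ e ∈ E, c e * g e := by
          apply Finset.sum_le_sum_of_subset_of_nonneg (Finset.filter_subset _ _)
          intro e he _
          exact mul_nonneg (by positivity) (hg0 e he)
        have hcestar : c estar = (estar.card : ℝ) := by
          have h0 : estar.filter (fun v => v ∈ estar) = estar :=
            Finset.filter_true_of_mem (fun v hv => hv)
          simp only [hc, h0]
        have hA4 : ∑ e ∈ D.erase estar, g e ≤ ∑ e ∈ D.erase estar, c e * g e := by
          apply Finset.sum_le_sum
          intro e he
          have heD : e ∈ D := Finset.mem_of_mem_erase he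
          rw [hD, Finset.mem_filter] at heD
          obtain ⟨v, hv1, hv2⟩ := Finset.not_disjoint_iff.mp heD.2
          have hne : (estar.filter (fun v => v ∈ e)).Nonempty :=
            ⟨v, Finset.mem_filter.mpr ⟨hv2, hv1⟩⟩
          have h1 : (1:ℝ) ≤ c e := by
            simp only [hc]
            exact_mod_cast Finset.card_pos.mpr hne
          exact le_mul_of_one_le_left (hg0 e heD.1) h1
        have h5 : ∑ x ∈ D.erase estar, c x * g x + c estar * g estar
            = ∑ x ∈ D, c x * g x := Finset.sum_erase_add D (fun e => c e * g e) hesD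
        have h6 := Finset.sum_erase_add D g hesD
        have h7 : ∑ e ∈ D, c e * g e ≤ (estar.card : ℝ) := by linarith [hA1, hA2, hA3]
        have h8 : c estar * g estar = (estar.card : ℝ) * g estar := by rw [hcestar]
        have hfinal : ∑ e ∈ D, g e
            ≤ (estar.card : ℝ) - ((estar.card : ℝ) - 1) * g estar := by nlinarith [hA4, h5, h6, h7, h8]
        have hb := bound_num d hd estar.card (Finset.card_pos.mpr hesne) hestar.2.2
          (g estar) hges
        linarith
      refine ⟨M, hMsub, hMdisj, ?_⟩
      calc ∑ e ∈ E, f e ≤ ∑ e ∈ E, g e := hgsum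
        _ = ∑ e ∈ E₂, g e + ∑ e ∈ D, g e := hsplit.symm
        _ ≤ ((d:ℝ) - 1 + 1 / d) * M'.card + ((d:ℝ) - 1 + 1 / d) := by
            exact add_le_add hMb hDle
        _ = ((d:ℝ) - 1 + 1 / d) * M.card := by
            rw [hMcard]
            push_cast
            ring

end Induction

/-- Füredi's theorem: in a hypergraph of rank `d ≥ 2`,
`ν(H) ≥ ν*(H) / (d - 1 + 1/d)`. -/
theorem furedi_rank {α : Type*} [DecidableEq α]
    (V : Finset α) (E : Finset (Finset α)) (d : ℕ) (hd : 2 ≤ d)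
    (hE : ∀ e ∈ E, e ⊆ V ∧ e.Nonempty ∧ e.card ≤ d)
    (f : Finset α → ℝ) (hf0 : ∀ e ∈ E, 0 ≤ f e)
    (hfm : ∀ v ∈ V, ∑ e ∈ E.filter (fun e => v ∈ e), f e ≤ 1) :
    ∃ M : Finset (Finset α), M ⊆ E ∧
      (↑M : Set (Finset α)).Pairwise (fun a b => Disjoint a b) ∧
      (∑ e ∈ E, f e) / ((d : ℝ) - 1 + 1 / d) ≤ M.card := by
  obtain ⟨M, hME, hMd, hMb⟩ := furedi_aux V d hd E.card E le_rfl hE f hf0 hfm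
  refine ⟨M, hME, hMd, ?_⟩
  have h2 : (2:ℝ) ≤ (d:ℝ) := by exact_mod_cast hd
  have hd0 : (0:ℝ) < d := by linarith
  have hinv : (0:ℝ) < 1 / d := by positivity
  have hc : (0:ℝ) < (d : ℝ) - 1 + 1 / d := by linarith
  rw [div_le_iff₀ hc, mul_comm]
  exact hMb
end

section
/- For any finite $d$-partite hypergraph $H$ with $d \geq 2$, the matching number satisfies $\nu(H) \geq \nu^*(H)/(d-1)$. -/
open Finset

open scoped Classical

private lemma edge_card_eq {α : Type*} [DecidableEq α] {d : ℕ} (c : α → Fin d) {e : Finset α}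
    (h : ∀ j : Fin d, (e.filter (fun v => c v = j)).card = 1) : e.card = d := by
  rw [Finset.card_eq_sum_card_fiberwise (f := c) (t := Finset.univ) (fun x _ => mem_univ _)]
  simp [h]

private lemma exists_big {α : Type*} [DecidableEq α] (V : Finset α) (d : ℕ) (hd : 2 ≤ d)
    (c : α → Fin d) (E : Finset (Finset α))
    (hE : ∀ e ∈ E, e ⊆ V ∧ ∀ j : Fin d, (e.filter (fun v => c v = j)).card = 1) :
    ∀ n : ℕ, ∀ f : Finset α → ℝ,
      (∀ e ∈ E, 0 ≤ f e) →
      (∀ v ∈ V, ∑ e ∈ E.filter (fun e => v ∈ e), f e ≤ 1) →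
      (0 < ∑ e ∈ E, f e) →
      ((E.filter fun e => f e ≠ 0).card +
        (V.card - (V.filter fun v => ∑ e ∈ E.filter (fun e => v ∈ e), f e = 1).card) ≤ n) →
      ∃ g : Finset α → ℝ, (∀ e ∈ E, 0 ≤ g e) ∧
        (∀ v ∈ V, ∑ e ∈ E.filter (fun e => v ∈ e), g e ≤ 1) ∧
        (∑ e ∈ E, f e ≤ ∑ e ∈ E, g e) ∧ ∃ e ∈ E, 1/((d:ℝ)-1) ≤ g e := by
  have hd1 : (1:ℝ) ≤ (d:ℝ) - 1 := by
    have : (2:ℝ) ≤ (d:ℝ) := by exact_mod_cast hd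
    linarith
  have hd1pos : (0:ℝ) < (d:ℝ) - 1 := lt_of_lt_of_le one_pos hd1
  intro n
  induction n with
  | zero =>
    intro f hf0 hfm hs hμ
    exfalso
    have hcard : (E.filter fun e => f e ≠ 0).card = 0 :=
      Nat.le_zero.1 (le_trans (Nat.le_add_right _ _) hμ)
    have hzero : ∀ e ∈ E, f e = 0 := by
      intro e he
      by_contra hne
      have : e ∈ E.filter fun e => f e ≠ 0 := mem_filter.2 ⟨he, hne⟩
      simp [Finset.card_eq_zero.1 hcard] at this
    have : ∑ e ∈ E, f e = 0 := Finset.sum_eq_zero hzero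
    linarith
  | succ n ih =>
    intro f hf0 hfm hs hμ
    by_cases hbig : ∃ e ∈ E, 1/((d:ℝ)-1) ≤ f e
    · exact ⟨f, hf0, hfm, le_refl _, hbig⟩
    push_neg at hbig
    set j0 : Fin d := ⟨0, by omega⟩ with hj0def
    set j1 : Fin d := ⟨1, by omega⟩ with hj1def
    have h01 : j0 ≠ j1 := by simp [hj0def, hj1def, Fin.ext_iff]
    set S := E.filter (fun e => f e ≠ 0) with hSdef
    set T := V.filter (fun v => ∑ e ∈ E.filter (fun e => v ∈ e), f e = 1) with hTdef
    have hSsub : S ⊆ E := filter_subset _ _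
    have hfS : ∀ e ∈ S, 0 < f e := by
      intro e he
      rcases mem_filter.1 he with ⟨heE, hne⟩
      exact lt_of_le_of_ne (hf0 e heE) (Ne.symm hne)
    have hfnS : ∀ e ∈ E, e ∉ S → f e = 0 := by
      intro e he hn
      by_contra hne
      exact hn (mem_filter.2 ⟨he, hne⟩)
    have hSne : S.Nonempty := by
      rw [Finset.nonempty_iff_ne_empty]
      intro hempty
      have : ∑ e ∈ E, f e = 0 := Finset.sum_eq_zero (fun e he => by
        refine hfnS e he ?_
        rw [hempty]
        exact notMem_empty e)
      linarith
    -- restrict vertex sums to the support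
    have hsum_filter : ∀ (h : Finset α → ℝ), (∀ e ∈ E, e ∉ S → h e = 0) → ∀ v : α,
        ∑ e ∈ E.filter (fun e => v ∈ e), h e = ∑ e ∈ S.filter (fun e => v ∈ e), h e := by
      intro h h0 v
      refine (Finset.sum_subset (filter_subset_filter _ hSsub) ?_).symm
      intro e heE heS
      rcases mem_filter.1 heE with ⟨heE', hv⟩
      exact h0 e heE' (fun hc => heS (mem_filter.2 ⟨hc, hv⟩))
    -- tight vertices have support degree ≥ d
    have hdegT : ∀ v ∈ T, d ≤ (S.filter (fun e => v ∈ e)).card := by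
      intro v hv
      rcases mem_filter.1 hv with ⟨hvV, hDv⟩
      have h1 : (1:ℝ) = ∑ e ∈ S.filter (fun e => v ∈ e), f e := by
        rw [← hsum_filter f hfnS v]; exact hDv.symm
      have hne : (S.filter (fun e => v ∈ e)).Nonempty := by
        rw [Finset.nonempty_iff_ne_empty]
        intro hempty
        rw [hempty] at h1; simp at h1
      have hlt : ∑ e ∈ S.filter (fun e => v ∈ e), f e <
          ((S.filter (fun e => v ∈ e)).card : ℝ) * (1/((d:ℝ)-1)) := by
        have h := Finset.sum_lt_sum_of_nonempty hne
          (f := f) (g := fun _ => 1/((d:ℝ)-1))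
          (fun e he => hbig e (hSsub (mem_of_mem_filter e he)))
        rwa [Finset.sum_const, nsmul_eq_mul] at h
      have h2 : (d:ℝ) - 1 < ((S.filter (fun e => v ∈ e)).card : ℝ) := by
        rw [← h1] at hlt
        have hinv : (1/((d:ℝ)-1)) * ((d:ℝ)-1) = 1 := by field_simp
        nlinarith
      have h3 : (d:ℕ) - 1 < (S.filter (fun e => v ∈ e)).card := by
        have : ((d - 1 : ℕ) : ℝ) < ((S.filter (fun e => v ∈ e)).card : ℝ) := by
          rw [Nat.cast_sub (by omega)]; push_cast; linarith
        exact_mod_cast this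
      omega
    have hcount : ∀ e ∈ S, (T.filter (fun v => v ∈ e)).card ≤ d := by
      intro e he
      have hsub : T.filter (fun v => v ∈ e) ⊆ e := fun v hv => (mem_filter.1 hv).2
      exact (card_le_card hsub).trans_eq (edge_card_eq c (hE e (hSsub he)).2)
    by_cases hind : LinearIndependent ℝ
      (fun (e : ↥S) (v : ↥T) => if (v : α) ∈ (e : Finset α) then (1:ℝ) else 0)
    · -- independent case: contradiction
      exfalso
      set w : ↥S → (↥T → ℝ) :=
        fun (e : ↥S) (v : ↥T) => if (v : α) ∈ (e : Finset α) then (1:ℝ) else 0 with hwdef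
      have hST : S.card ≤ T.card := by
        have := hind.fintype_card_le_finrank
        rwa [Module.finrank_pi, Fintype.card_coe, Fintype.card_coe] at this
      have hinc : ∑ v ∈ T, (S.filter (fun e => v ∈ e)).card
          = ∑ e ∈ S, (T.filter (fun v => v ∈ e)).card := by
        simp_rw [Finset.card_filter]
        rw [Finset.sum_comm]
      have hA1 : d * T.card ≤ ∑ v ∈ T, (S.filter (fun e => v ∈ e)).card := by
        calc d * T.card = ∑ _v ∈ T, d := by rw [Finset.sum_const, smul_eq_mul, mul_comm]
        _ ≤ _ := Finset.sum_le_sum hdegT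
      have hA2 : ∑ e ∈ S, (T.filter (fun v => v ∈ e)).card ≤ d * S.card := by
        calc ∑ e ∈ S, (T.filter (fun v => v ∈ e)).card ≤ ∑ _e ∈ S, d :=
              Finset.sum_le_sum hcount
        _ = d * S.card := by rw [Finset.sum_const, smul_eq_mul, mul_comm]
      have hTS : T.card ≤ S.card := by
        have h1 : d * T.card ≤ d * S.card := by
          calc d * T.card ≤ ∑ v ∈ T, (S.filter (fun e => v ∈ e)).card := hA1
          _ = _ := hinc
          _ ≤ d * S.card := hA2
        exact Nat.le_of_mul_le_mul_left h1 (by omega)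
      have hcardeq : S.card = T.card := le_antisymm hST hTS
      have hIeq : ∑ e ∈ S, (T.filter (fun v => v ∈ e)).card = d * S.card := by
        refine le_antisymm hA2 ?_
        calc d * S.card = d * T.card := by rw [hcardeq]
        _ ≤ ∑ v ∈ T, (S.filter (fun e => v ∈ e)).card := hA1
        _ = _ := hinc
      have hfeq : ∀ e ∈ S, T.filter (fun v => v ∈ e) = e := by
        intro e he
        have hone : (T.filter (fun v => v ∈ e)).card = d := by
          by_contra hne
          have hlt : (T.filter (fun v => v ∈ e)).card < d :=
            lt_of_le_of_ne (hcount e he) hne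
          have hstrict : ∑ e ∈ S, (T.filter (fun v => v ∈ e)).card < ∑ _e ∈ S, d :=
            Finset.sum_lt_sum (fun i hi => hcount i hi) ⟨e, he, hlt⟩
          rw [hIeq, Finset.sum_const, smul_eq_mul, mul_comm] at hstrict
          omega
        have hsub : T.filter (fun v => v ∈ e) ⊆ e := fun v hv => (mem_filter.1 hv).2
        refine Finset.eq_of_subset_of_card_le hsub ?_
        rw [hone, edge_card_eq c (hE e (hSsub he)).2]
      have hsubT : ∀ e ∈ S, e ⊆ T := by
        intro e he v hv
        rw [← hfeq e he] at hv
        exact (mem_filter.1 hv).1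
      haveI : Nonempty ↥S := Finset.nonempty_coe_sort.2 hSne
      have hcardeq' : Fintype.card ↥S = Module.finrank ℝ (↥T → ℝ) := by
        rw [Module.finrank_pi, Fintype.card_coe, Fintype.card_coe, hcardeq]
      set b := basisOfLinearIndependentOfCardEqFinrank hind hcardeq' with hbdef
      have hcoe : ⇑b = w := coe_basisOfLinearIndependentOfCardEqFinrank _ _
      set u' : α → ℝ :=
        fun v => if c v = j0 then 1 else if c v = j1 then -1 else 0 with hu'def
      set u : ↥T → ℝ := fun v => u' ↑v with hudef
      have hwu : ∀ i : ↥S, ∑ v : ↥T, w i v * u v = 0 := by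
        intro i
        have h1 : ∑ v : ↥T, w i v * u v
            = ∑ v ∈ T, (if v ∈ (i : Finset α) then (1:ℝ) else 0) * u' v :=
          Finset.sum_coe_sort T (fun v => (if v ∈ (i : Finset α) then (1:ℝ) else 0) * u' v)
        rw [h1]
        have h2 : ∑ v ∈ T, (if v ∈ (i : Finset α) then ((1:ℝ)) else 0) * u' v
            = ∑ v ∈ (i : Finset α), u' v := by
          calc ∑ v ∈ T, (if v ∈ (i : Finset α) then (1:ℝ) else 0) * u' v
              = ∑ v ∈ T, (if v ∈ (i : Finset α) then u' v else 0) :=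
                Finset.sum_congr rfl (fun v _ => by
                  by_cases h : v ∈ (i : Finset α) <;> simp [h])
            _ = ∑ v ∈ T ∩ (i : Finset α), u' v := Finset.sum_ite_mem T _ u'
            _ = ∑ v ∈ (i : Finset α), u' v := by
                rw [← Finset.filter_mem_eq_inter, hfeq ↑i i.2]
        rw [h2]
        have h3 : ∀ v ∈ (i : Finset α), u' v =
            (if c v = j0 then (1:ℝ) else 0) - (if c v = j1 then 1 else 0) := by
          intro v _
          by_cases h0 : c v = j0
          · have hne1 : ¬ (c v = j1) := by rw [h0]; exact h01
            simp [hu'def, h0, hne1, h01]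
          · by_cases h1' : c v = j1
            · simp [hu'def, h0, h1', Ne.symm h01]
            · simp [hu'def, h0, h1']
        rw [Finset.sum_congr rfl h3, Finset.sum_sub_distrib]
        rw [Finset.sum_boole, Finset.sum_boole]
        have hc0 := (hE ↑i (hSsub i.2)).2 j0
        have hc1 := (hE ↑i (hSsub i.2)).2 j1
        rw [hc0, hc1]
        simp
      have hu0 : ∀ v : ↥T, u v = 0 := by
        have hrepr : (∑ i, b.repr u i • w i) = u := by
          conv_rhs => rw [← b.sum_repr u]
          rw [hcoe]
        have hFu : ∑ v : ↥T, u v * u v = 0 := by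
          have hstep : ∑ v : ↥T, u v * u v
              = ∑ v : ↥T, (∑ i, b.repr u i • w i) v * u v :=
            Finset.sum_congr rfl (fun v _ => by rw [hrepr])
          have hswap : ∑ v : ↥T, (∑ i, b.repr u i • w i) v * u v
              = ∑ i, b.repr u i * (∑ v : ↥T, w i v * u v) := by
            simp_rw [Finset.sum_apply, Pi.smul_apply, smul_eq_mul, Finset.sum_mul, mul_assoc]
            rw [Finset.sum_comm]
            simp_rw [Finset.mul_sum]
          rw [hstep, hswap]
          calc ∑ i, b.repr u i * (∑ v : ↥T, w i v * u v)
              = ∑ i : ↥S, b.repr u i * 0 :=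
                Finset.sum_congr rfl (fun i _ => by rw [hwu i])
            _ = 0 := by simp
        intro v
        have := (Finset.sum_eq_zero_iff_of_nonneg
          (fun v _ => mul_self_nonneg (u v))).1 hFu v (mem_univ v)
        exact mul_self_eq_zero.1 this
      -- contradiction: class-0 vertex of a support edge
      obtain ⟨e0, he0⟩ := hSne
      have hc0 := (hE e0 (hSsub he0)).2 j0
      obtain ⟨v0, hv0⟩ := Finset.card_eq_one.1 hc0
      have hv0mem : v0 ∈ e0.filter (fun v => c v = j0) := by
        rw [hv0]; exact mem_singleton_self v0
      rcases mem_filter.1 hv0mem with ⟨hv0e, hv0c⟩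
      have hv0T : v0 ∈ T := hsubT e0 he0 hv0e
      have := hu0 ⟨v0, hv0T⟩
      rw [hudef] at this
      simp only [hu'def] at this
      rw [if_pos hv0c] at this
      norm_num at this
    · -- dependent case: perturb
      obtain ⟨gg, hgg, i0, hi0⟩ := Fintype.not_linearIndependent_iff.1 hind
      have hexists : ∃ l0 : ↥S → ℝ, (∑ i : ↥S, l0 i • (fun (v : ↥T) =>
          if (v : α) ∈ ((i : Finset α)) then (1:ℝ) else 0)) = 0 ∧ l0 i0 ≠ 0 ∧
          0 ≤ ∑ i : ↥S, l0 i := by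
        rcases le_or_gt 0 (∑ i : ↥S, gg i) with h | h
        · exact ⟨gg, hgg, hi0, h⟩
        · refine ⟨fun i => -gg i, ?_, by simpa using hi0, ?_⟩
          · simp only [neg_smul, Finset.sum_neg_distrib, hgg, neg_zero]
          · rw [Finset.sum_neg_distrib]
            linarith
      obtain ⟨l0, hl0zero, hl0i0, hl0sum⟩ := hexists
      set lam : Finset α → ℝ := fun e => if h : e ∈ S then l0 ⟨e, h⟩ else 0 with hlamdef
      have hlam_nS : ∀ e ∉ S, lam e = 0 := fun e he => dif_neg he
      have hlamcoe : ∀ i : ↥S, lam ↑i = l0 i := by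
        intro i
        simp only [hlamdef]
        rw [dif_pos i.2]
      have hlamattach : ∑ e ∈ S, lam e = ∑ i : ↥S, l0 i := by
        rw [← Finset.sum_coe_sort S lam]
        exact Finset.sum_congr rfl (fun i _ => hlamcoe i)
      have hlamT : ∀ v ∈ T, ∑ e ∈ S.filter (fun e => v ∈ e), lam e = 0 := by
        intro v hv
        have h0 := congrFun hl0zero ⟨v, hv⟩
        rw [Finset.sum_apply] at h0
        simp only [Pi.smul_apply, smul_eq_mul, mul_ite, mul_one, mul_zero,
          Pi.zero_apply] at h0
        have h1 : ∑ e ∈ S.filter (fun e => v ∈ e), lam e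
            = ∑ e ∈ S, if v ∈ e then lam e else 0 := Finset.sum_filter _ _
        rw [h1, ← Finset.sum_coe_sort S (fun e => if v ∈ e then lam e else 0)]
        refine Eq.trans (Finset.sum_congr rfl (fun i _ => ?_)) h0
        by_cases hve : v ∈ (i : Finset α) <;> simp [hve, hlamcoe i]
      set dl : α → ℝ := fun v => ∑ e ∈ S.filter (fun e => v ∈ e), lam e with hdldef
      have hElam : ∀ v : α, ∑ e ∈ E.filter (fun e => v ∈ e), lam e = dl v := by
        intro v
        exact hsum_filter lam (fun e _ hn => hlam_nS e hn) v
      set Dv : α → ℝ := fun v => ∑ e ∈ E.filter (fun e => v ∈ e), f e with hDvdef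
      set B1 : Finset ℝ := (S.filter (fun e => lam e < 0)).image (fun e => -(f e) / lam e)
        with hB1def
      set B2 : Finset ℝ := ((V \ T).filter (fun v => 0 < dl v)).image
        (fun v => (1 - Dv v) / dl v) with hB2def
      set B := B1 ∪ B2 with hBdef
      have hBpos : ∀ x ∈ B, 0 < x := by
        intro x hx
        rcases mem_union.1 hx with h | h
        · obtain ⟨e, he, rfl⟩ := mem_image.1 h
          rcases mem_filter.1 he with ⟨heS, hneg⟩
          have hfe := hfS e heS
          exact div_pos_iff.2 (Or.inr ⟨by linarith, hneg⟩)
        · obtain ⟨v, hv, rfl⟩ := mem_image.1 h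
          rcases mem_filter.1 hv with ⟨hvVT, hdl⟩
          rcases mem_sdiff.1 hvVT with ⟨hvV, hvT⟩
          have hDle : Dv v ≤ 1 := hfm v hvV
          have hDne : Dv v ≠ 1 := by
            intro hc
            exact hvT (mem_filter.2 ⟨hvV, hc⟩)
          have : Dv v < 1 := lt_of_le_of_ne hDle hDne
          exact div_pos (by linarith) hdl
      have hBne : B.Nonempty := by
        by_cases hex : ∃ e ∈ S, lam e < 0
        · obtain ⟨e, he, hneg⟩ := hex
          exact ⟨-(f e) / lam e, mem_union_left _ (mem_image_of_mem _
            (mem_filter.2 ⟨he, hneg⟩))⟩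
        · push_neg at hex
          have he1S : (↑i0 : Finset α) ∈ S := i0.2
          have hlami0 : lam ↑i0 = l0 i0 := hlamcoe i0
          have hlampos : 0 < lam ↑i0 := by
            rcases (hex ↑i0 he1S).lt_or_eq with h' | h'
            · exact h'
            · have hz : l0 i0 = 0 := by rw [← hlami0]; exact h'.symm
              exact absurd hz hl0i0
          have he1card : (↑i0 : Finset α).card = d := edge_card_eq c (hE ↑i0 (hSsub he1S)).2
          have he1ne : (↑i0 : Finset α).Nonempty := card_pos.1 (by omega)
          obtain ⟨v0, hv0⟩ := he1ne
          have hv0V : v0 ∈ V := (hE ↑i0 (hSsub he1S)).1 hv0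
          have hle : lam ↑i0 ≤ ∑ e ∈ S.filter (fun e => v0 ∈ e), lam e := by
            refine Finset.single_le_sum (fun e he => hex e (mem_of_mem_filter e he)) ?_
            exact mem_filter.2 ⟨he1S, hv0⟩
          have hdlpos : 0 < dl v0 := lt_of_lt_of_le hlampos hle
          have hv0T : v0 ∉ T := by
            intro hc
            have hzero : ∑ e ∈ S.filter (fun e => v0 ∈ e), lam e = 0 := hlamT v0 hc
            linarith
          exact ⟨(1 - Dv v0) / dl v0, mem_union_right _ (mem_image_of_mem _
            (mem_filter.2 ⟨mem_sdiff.2 ⟨hv0V, hv0T⟩, hdlpos⟩))⟩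
      set t := B.min' hBne with htdef
      have ht : 0 < t := hBpos _ (B.min'_mem hBne)
      set g : Finset α → ℝ := fun e => f e + t * lam e with hgdef
      have hgnS : ∀ e ∉ S, g e = f e := by
        intro e hn
        simp [hgdef, hlam_nS e hn]
      have hg0 : ∀ e ∈ E, 0 ≤ g e := by
        intro e he
        by_cases heS : e ∈ S
        · rcases le_or_gt 0 (lam e) with hl | hl
          · have h1 : 0 ≤ t * lam e := mul_nonneg ht.le hl
            have h2 := hf0 e he
            simp only [hgdef]
            linarith
          · have hmem : -(f e) / lam e ∈ B := mem_union_left _ (mem_image_of_mem _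
              (mem_filter.2 ⟨heS, hl⟩))
            have hmin : t ≤ -(f e) / lam e := Finset.min'_le B _ hmem
            have h1 : (-(f e) / lam e) * lam e ≤ t * lam e :=
              mul_le_mul_of_nonpos_right hmin hl.le
            rw [div_mul_cancel₀ _ (ne_of_lt hl)] at h1
            simp only [hgdef]
            linarith
        · rw [hgnS e heS]
          exact hf0 e he
      have hDg : ∀ v : α, ∑ e ∈ E.filter (fun e => v ∈ e), g e = Dv v + t * dl v := by
        intro v
        simp only [hgdef]
        rw [Finset.sum_add_distrib, ← Finset.mul_sum, hElam v, hDvdef]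
      have hgm : ∀ v ∈ V, ∑ e ∈ E.filter (fun e => v ∈ e), g e ≤ 1 := by
        intro v hv
        rw [hDg v]
        by_cases hvT : v ∈ T
        · have hdl0 : dl v = 0 := hlamT v hvT
          have hDv1 : Dv v = 1 := (mem_filter.1 hvT).2
          rw [hdl0, hDv1]; norm_num
        · rcases le_or_gt (dl v) 0 with h | h
          · have h1 : t * dl v ≤ 0 := mul_nonpos_iff.2 (Or.inl ⟨ht.le, h⟩)
            have h2 : Dv v ≤ 1 := hfm v hv
            linarith
          · have hmem : (1 - Dv v) / dl v ∈ B := mem_union_right _ (mem_image_of_mem _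
              (mem_filter.2 ⟨mem_sdiff.2 ⟨hv, hvT⟩, h⟩))
            have hmin : t ≤ (1 - Dv v) / dl v := Finset.min'_le B _ hmem
            have h1 : t * dl v ≤ 1 - Dv v := by
              rw [le_div_iff₀ h] at hmin
              linarith
            linarith
      have hElamsum : ∑ e ∈ E, lam e = ∑ e ∈ S, lam e :=
        (Finset.sum_subset hSsub (fun e _ hn => hlam_nS e hn)).symm
      have hgsum : ∑ e ∈ E, f e ≤ ∑ e ∈ E, g e := by
        simp only [hgdef]
        rw [Finset.sum_add_distrib, ← Finset.mul_sum, hElamsum, hlamattach]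
        nlinarith [mul_nonneg ht.le hl0sum]
      have hspos' : 0 < ∑ e ∈ E, g e := lt_of_lt_of_le hs hgsum
      -- measure decrease
      have hSg : E.filter (fun e => g e ≠ 0) ⊆ S := by
        intro e he
        rcases mem_filter.1 he with ⟨heE, hne⟩
        by_contra hn
        exact hne (by rw [hgnS e hn, hfnS e heE hn])
      have hTg : T ⊆ V.filter (fun v => ∑ e ∈ E.filter (fun e => v ∈ e), g e = 1) := by
        intro v hv
        rcases mem_filter.1 hv with ⟨hvV, hDv1⟩
        have hdl0 : dl v = 0 := hlamT v hv
        have hDv1 : Dv v = 1 := hDv1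
        refine mem_filter.2 ⟨hvV, ?_⟩
        rw [hDg v, hdl0, hDv1]
        norm_num
      have hμg : (E.filter fun e => g e ≠ 0).card +
          (V.card - (V.filter fun v =>
            ∑ e ∈ E.filter (fun e => v ∈ e), g e = 1).card) ≤ n := by
        have hmem := B.min'_mem hBne
        rw [← htdef] at hmem
        have hTgV : (V.filter (fun v => ∑ e ∈ E.filter (fun e => v ∈ e), g e = 1)) ⊆ V :=
          filter_subset _ _
        rcases mem_union.1 hmem with h | h
        · -- an edge dies
          obtain ⟨e1, he1, heq⟩ := mem_image.1 h
          rcases mem_filter.1 he1 with ⟨he1S, hneg⟩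
          have hge1 : g e1 = 0 := by
            simp only [hgdef]
            rw [← heq, div_mul_cancel₀ _ (ne_of_lt hneg)]
            ring
          have he1not : e1 ∉ E.filter (fun e => g e ≠ 0) := by
            intro hc
            exact (mem_filter.1 hc).2 hge1
          have hlt : (E.filter fun e => g e ≠ 0).card < S.card :=
            Finset.card_lt_card ((Finset.ssubset_iff_of_subset hSg).2 ⟨e1, he1S, he1not⟩)
          have hle2 : V.card - (V.filter (fun v =>
              ∑ e ∈ E.filter (fun e => v ∈ e), g e = 1)).card ≤ V.card - T.card :=
            Nat.sub_le_sub_left (card_le_card hTg) V.card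
          omega
        · -- a vertex becomes tight
          obtain ⟨v1, hv1, heq⟩ := mem_image.1 h
          rcases mem_filter.1 hv1 with ⟨hv1VT, hdl1⟩
          rcases mem_sdiff.1 hv1VT with ⟨hv1V, hv1T⟩
          have hDg1 : ∑ e ∈ E.filter (fun e => v1 ∈ e), g e = 1 := by
            rw [hDg v1, ← heq, div_mul_cancel₀ _ (ne_of_gt hdl1)]
            ring
          have hv1Tg : v1 ∈ V.filter (fun v => ∑ e ∈ E.filter (fun e => v ∈ e), g e = 1) :=
            mem_filter.2 ⟨hv1V, hDg1⟩
          have hlt : T.card < (V.filter (fun v =>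
              ∑ e ∈ E.filter (fun e => v ∈ e), g e = 1)).card :=
            Finset.card_lt_card ((Finset.ssubset_iff_of_subset hTg).2 ⟨v1, hv1Tg, hv1T⟩)
          have hle1 : (E.filter fun e => g e ≠ 0).card ≤ S.card := card_le_card hSg
          have hTgle : (V.filter (fun v =>
              ∑ e ∈ E.filter (fun e => v ∈ e), g e = 1)).card ≤ V.card := card_le_card hTgV
          omega
      obtain ⟨g', hg'0, hg'm, hg'sum, hbig'⟩ := ih g hg0 hgm hspos' hμg
      exact ⟨g', hg'0, hg'm, le_trans hgsum hg'sum, hbig'⟩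

private lemma matching_bound {α : Type*} [DecidableEq α] (V : Finset α) (d : ℕ) (hd : 2 ≤ d)
    (c : α → Fin d) :
    ∀ n : ℕ, ∀ E : Finset (Finset α), E.card ≤ n →
    (∀ e ∈ E, e ⊆ V ∧ ∀ j : Fin d, (e.filter (fun v => c v = j)).card = 1) →
    ∀ f : Finset α → ℝ, (∀ e ∈ E, 0 ≤ f e) →
    (∀ v ∈ V, ∑ e ∈ E.filter (fun e => v ∈ e), f e ≤ 1) →
    ∃ M : Finset (Finset α), M ⊆ E ∧
      (↑M : Set (Finset α)).Pairwise (fun a b => Disjoint a b) ∧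
      ∑ e ∈ E, f e ≤ ((d:ℝ) - 1) * M.card := by
  have hd1pos : (0:ℝ) < (d:ℝ) - 1 := by
    have : (2:ℝ) ≤ (d:ℝ) := by exact_mod_cast hd
    linarith
  intro n
  induction n with
  | zero =>
    intro E hcard _ f _ _
    have hE0 : E = ∅ := card_eq_zero.1 (Nat.le_zero.1 hcard)
    subst hE0
    exact ⟨∅, empty_subset _, by simp, by simp⟩
  | succ n ih =>
    intro E hcard hE f hf0 hfm
    by_cases hs : ∑ e ∈ E, f e ≤ 0
    · refine ⟨∅, empty_subset _, by simp, ?_⟩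
      simpa using hs.trans (by positivity)
    · push_neg at hs
      obtain ⟨g, hg0, hgm, hgsum, e0, he0E, he0big⟩ :=
        exists_big V d hd c E hE _ f hf0 hfm hs (le_refl _)
      have he0card : e0.card = d := edge_card_eq c (hE e0 he0E).2
      have he0ne : e0.Nonempty := card_pos.1 (by omega)
      set E' := E.filter (fun e => Disjoint e e0) with hE'def
      have he0nE' : e0 ∉ E' := by
        intro h
        have := (mem_filter.1 h).2
        rw [disjoint_self] at this
        exact he0ne.ne_empty (by simpa using this)
      have hE'sub : E' ⊆ E := filter_subset _ _
      have hE'card : E'.card ≤ n := by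
        have hss : E' ⊂ E := (Finset.ssubset_iff_of_subset hE'sub).2 ⟨e0, he0E, he0nE'⟩
        have := card_lt_card hss
        omega
      -- the edges meeting e0
      set N := E.filter (fun e => ¬ Disjoint e e0) with hNdef
      have he0N : e0 ∈ N := by
        refine mem_filter.2 ⟨he0E, ?_⟩
        rw [disjoint_self]
        intro h
        exact he0ne.ne_empty (by simpa using h)
      have hsplit : ∑ e ∈ E', g e + ∑ e ∈ N, g e = ∑ e ∈ E, g e :=
        Finset.sum_filter_add_sum_filter_not E _ g
      -- double counting over vertices of e0
      have hswap : ∑ v ∈ e0, ∑ e ∈ E.filter (fun e => v ∈ e), g e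
          = ∑ e ∈ E, ((e0.filter (fun v => v ∈ e)).card : ℝ) * g e := by
        simp_rw [Finset.sum_filter]
        rw [Finset.sum_comm]
        refine Finset.sum_congr rfl (fun e _ => ?_)
        rw [Finset.card_filter]
        push_cast
        rw [Finset.sum_mul]
        refine Finset.sum_congr rfl (fun v _ => ?_)
        by_cases h : v ∈ e <;> simp [h]
      have hL : ∑ v ∈ e0, ∑ e ∈ E.filter (fun e => v ∈ e), g e ≤ (d:ℝ) := by
        calc ∑ v ∈ e0, ∑ e ∈ E.filter (fun e => v ∈ e), g e
            ≤ ∑ _v ∈ e0, (1:ℝ) := Finset.sum_le_sum (fun v hv => hgm v ((hE e0 he0E).1 hv))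
          _ = (e0.card : ℝ) := by simp
          _ = (d:ℝ) := by rw [he0card]
      have hrestrict : ∑ e ∈ E, ((e0.filter (fun v => v ∈ e)).card : ℝ) * g e
          = ∑ e ∈ N, ((e0.filter (fun v => v ∈ e)).card : ℝ) * g e := by
        refine (Finset.sum_subset (filter_subset _ _) ?_).symm
        intro e heE heN
        have hdisj : Disjoint e e0 := by
          by_contra hc
          exact heN (mem_filter.2 ⟨heE, hc⟩)
        have : e0.filter (fun v => v ∈ e) = ∅ := by
          rw [Finset.filter_eq_empty_iff]
          intro v hv0 hve
          exact (Finset.disjoint_right.1 hdisj hv0) hve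
        rw [this]
        simp
      have hcard1 : ∀ e ∈ N, (1:ℝ) ≤ ((e0.filter (fun v => v ∈ e)).card : ℝ) := by
        intro e he
        rcases mem_filter.1 he with ⟨heE, hnd⟩
        obtain ⟨v, hv⟩ := Finset.not_disjoint_iff.1 hnd
        have : v ∈ e0.filter (fun v => v ∈ e) := mem_filter.2 ⟨hv.2, hv.1⟩
        have hpos : 0 < (e0.filter (fun v => v ∈ e)).card := card_pos.2 ⟨v, this⟩
        exact_mod_cast hpos
      have he0filter : (e0.filter (fun v => v ∈ e0)).card = d := by
        rw [Finset.filter_true_of_mem (fun v hv => hv), he0card]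
      have hlower : ∑ e ∈ N, g e + ((d:ℝ) - 1) * g e0
          ≤ ∑ e ∈ N, ((e0.filter (fun v => v ∈ e)).card : ℝ) * g e := by
        have hsplit2 : ∀ e ∈ N, ((e0.filter (fun v => v ∈ e)).card : ℝ) * g e
            = g e + (((e0.filter (fun v => v ∈ e)).card : ℝ) - 1) * g e := by
          intro e _
          ring
        rw [Finset.sum_congr rfl hsplit2, Finset.sum_add_distrib]
        have hterm : ((d:ℝ) - 1) * g e0
            ≤ ∑ e ∈ N, (((e0.filter (fun v => v ∈ e)).card : ℝ) - 1) * g e := by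
          have he0term : (((e0.filter (fun v => v ∈ e0)).card : ℝ) - 1) * g e0
              = ((d:ℝ) - 1) * g e0 := by
            rw [he0filter]
          refine le_trans (le_of_eq he0term.symm) ?_
          refine Finset.single_le_sum (f := fun e =>
            (((e0.filter (fun v => v ∈ e)).card : ℝ) - 1) * g e) ?_ he0N
          intro e he
          have h1 := hcard1 e he
          have h2 := hg0 e (mem_of_mem_filter e he)
          exact mul_nonneg (by linarith) h2
        exact add_le_add le_rfl hterm
      have hN1 : ∑ e ∈ N, g e ≤ (d:ℝ) - 1 := by
        have hchain : ∑ e ∈ N, g e + ((d:ℝ) - 1) * g e0 ≤ (d:ℝ) := by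
          calc ∑ e ∈ N, g e + ((d:ℝ) - 1) * g e0
              ≤ ∑ e ∈ N, ((e0.filter (fun v => v ∈ e)).card : ℝ) * g e := hlower
            _ = ∑ e ∈ E, ((e0.filter (fun v => v ∈ e)).card : ℝ) * g e := hrestrict.symm
            _ = ∑ v ∈ e0, ∑ e ∈ E.filter (fun e => v ∈ e), g e := hswap.symm
            _ ≤ (d:ℝ) := hL
        have hge : (1:ℝ) ≤ ((d:ℝ) - 1) * g e0 := by
          have h1 : ((d:ℝ) - 1) * (1/((d:ℝ)-1)) = 1 := by field_simp
          calc (1:ℝ) = ((d:ℝ)-1) * (1/((d:ℝ)-1)) := h1.symm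
            _ ≤ ((d:ℝ)-1) * g e0 := mul_le_mul_of_nonneg_left he0big hd1pos.le
        linarith
      -- apply induction hypothesis to E'
      obtain ⟨M', hM'sub, hM'pair, hM'sum⟩ := ih E' hE'card
        (fun e he => hE e (hE'sub he)) g (fun e he => hg0 e (hE'sub he))
        (fun v hv => le_trans (Finset.sum_le_sum_of_subset_of_nonneg
          (filter_subset_filter _ hE'sub)
          (fun e he _ => hg0 e (mem_of_mem_filter e he))) (hgm v hv))
      have he0nM' : e0 ∉ M' := fun h => he0nE' (hM'sub h)
      refine ⟨insert e0 M', ?_, ?_, ?_⟩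
      · exact Finset.insert_subset he0E (hM'sub.trans hE'sub)
      · rw [Finset.coe_insert]
        refine (Set.pairwise_insert_of_symm (r := fun a b => Disjoint a b)).2 ⟨hM'pair, ?_⟩
        intro b hb _
        have hbE' : b ∈ E' := hM'sub hb
        exact ((mem_filter.1 hbE').2).symm
      · have hcardM : (insert e0 M').card = M'.card + 1 :=
          Finset.card_insert_of_notMem he0nM'
        rw [hcardM]
        push_cast
        have h1 : ∑ e ∈ E, f e ≤ ∑ e ∈ E, g e := hgsum
        have h2 : ∑ e ∈ E', g e ≤ ((d:ℝ) - 1) * M'.card := hM'sum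
        nlinarith [hsplit, hN1]

/-- Füredi's theorem for `d`-partite hypergraphs: `ν(H) ≥ ν*(H) / (d - 1)`. -/
theorem furedi_partite {α : Type*} [DecidableEq α]
    (V : Finset α) (E : Finset (Finset α)) (d : ℕ) (hd : 2 ≤ d)
    (c : α → Fin d)
    (hE : ∀ e ∈ E, e ⊆ V ∧ ∀ j : Fin d, (e.filter (fun v => c v = j)).card = 1)
    (f : Finset α → ℝ) (hf0 : ∀ e ∈ E, 0 ≤ f e)
    (hfm : ∀ v ∈ V, ∑ e ∈ E.filter (fun e => v ∈ e), f e ≤ 1) :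
    ∃ M : Finset (Finset α), M ⊆ E ∧
      (↑M : Set (Finset α)).Pairwise (fun a b => Disjoint a b) ∧
      (∑ e ∈ E, f e) / ((d : ℝ) - 1) ≤ M.card := by
  have hd1pos : (0:ℝ) < (d:ℝ) - 1 := by
    have : (2:ℝ) ≤ (d:ℝ) := by exact_mod_cast hd
    linarith
  obtain ⟨M, h1, h2, h3⟩ := matching_bound V d hd c E.card E le_rfl hE f hf0 hfm
  refine ⟨M, h1, h2, ?_⟩
  rw [div_le_iff₀ hd1pos]
  linarith
end

section
/- Let $X$ be a convex triangulation of a polytope $P$ and let $v_1 v_2$ be an edge of $X$ with barycenter $b = (v_1+v_2)/2$. Then replacing each face $\mathrm{conv}\{v_1,v_2,u_3,\dots,u_j\}$ of $X$ containing the edge $v_1v_2$ by the two faces $\mathrm{conv}\{b,v_2,u_3,\dots,u_j\}$ and $\mathrm{conv}\{b,v_1,u_3,\dots,u_j\}$ (keeping all faces not containing $v_1v_2$) yields a convex triangulation of $P$ with vertex set $V(X) \cup \{b\}$. -/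
open Set Geometry Finset

set_option linter.unusedSectionVars false

open Set Geometry Finset

namespace StellarAux

variable {E : Type*} [AddCommGroup E] [Module ℝ E] [DecidableEq E]

lemma sum_split {M : Type*} [AddCommMonoid M] {s : Finset E} {v₁ v₂ : E}
    (h1 : v₁ ∈ s) (h2 : v₂ ∈ s) (hne : v₁ ≠ v₂) (g : E → M) :
    ∑ u ∈ s, g u = g v₁ + (g v₂ + ∑ u ∈ (s.erase v₁).erase v₂, g u) := by
  rw [← Finset.add_sum_erase _ g h1,
    ← Finset.add_sum_erase _ g (Finset.mem_erase.2 ⟨hne.symm, h2⟩)]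

lemma sum_insert_split {M : Type*} [AddCommMonoid M] {s : Finset E} {v b : E}
    (hbs : b ∉ s) (g : E → M) :
    ∑ u ∈ insert b (s.erase v), g u = g b + ∑ u ∈ s.erase v, g u :=
  Finset.sum_insert (fun h => hbs (Finset.mem_of_mem_erase h))

lemma b_ne {v₁ v₂ b : E} (hne : v₁ ≠ v₂) (hb : b = (1 / 2 : ℝ) • (v₁ + v₂)) :
    b ≠ v₁ ∧ b ≠ v₂ := by
  have h2 : (2 : ℝ) • b = v₁ + v₂ := by rw [hb, smul_smul]; norm_num
  constructor
  · intro h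
    rw [h, two_smul] at h2
    exact hne (add_left_cancel h2)
  · intro h
    rw [h, two_smul] at h2
    exact hne (add_right_cancel h2.symm)

end StellarAux

namespace StellarAux

variable {E : Type*} [AddCommGroup E] [Module ℝ E] [DecidableEq E]

lemma mem_A_iff {v₁ v₂ b : E} (hne : v₁ ≠ v₂) (hb : b = (1 / 2 : ℝ) • (v₁ + v₂))
    {s : Finset E} (hv₁ : v₁ ∈ s) (hv₂ : v₂ ∈ s) (hbs : b ∉ s) {x : E} :
    x ∈ convexHull ℝ (↑(insert b (s.erase v₁)) : Set E) ↔
      ∃ Q : E → ℝ, (∀ u ∈ s, 0 ≤ Q u) ∧ ∑ u ∈ s, Q u = 1 ∧ ∑ u ∈ s, Q u • u = x ∧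
        Q v₁ ≤ Q v₂ := by
  have hbne := b_ne hne hb
  have hv₂e : v₂ ∈ s.erase v₁ := Finset.mem_erase.2 ⟨hne.symm, hv₂⟩
  have hee : ∀ u ∈ (s.erase v₁).erase v₂, u ≠ v₁ ∧ u ≠ v₂ ∧ u ∈ s ∧ u ≠ b := by
    intro u hu
    have h2 := Finset.mem_erase.1 hu
    have h1 := Finset.mem_erase.1 h2.2
    exact ⟨h1.1, h2.1, h1.2, fun e => hbs (e ▸ h1.2)⟩
  constructor
  · intro hx
    obtain ⟨w, hw0, hw1, hwx⟩ := Finset.mem_convexHull'.1 hx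
    have hwb : 0 ≤ w b := hw0 b (Finset.mem_insert_self _ _)
    have hwv₂ : 0 ≤ w v₂ := hw0 v₂ (Finset.mem_insert_of_mem hv₂e)
    refine ⟨fun u => if u = v₁ then w b / 2 else if u = v₂ then w v₂ + w b / 2 else w u,
      ?_, ?_, ?_, ?_⟩
    · intro u hu
      dsimp only
      by_cases h1 : u = v₁
      · rw [if_pos h1]; linarith
      · rw [if_neg h1]
        by_cases h2 : u = v₂
        · rw [if_pos h2]; linarith
        · rw [if_neg h2]
          exact hw0 u (Finset.mem_insert_of_mem (Finset.mem_erase.2 ⟨h1, hu⟩))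
    · rw [sum_split hv₁ hv₂ hne, if_pos rfl, if_neg (Ne.symm hne), if_pos rfl,
        Finset.sum_congr rfl (fun u hu => by rw [if_neg (hee u hu).1, if_neg (hee u hu).2.1])]
      rw [sum_insert_split hbs w,
        ← Finset.add_sum_erase _ w hv₂e] at hw1
      linarith
    · rw [sum_split hv₁ hv₂ hne (fun u => _ • u), if_pos rfl, if_neg (Ne.symm hne), if_pos rfl,
        Finset.sum_congr rfl (fun u hu => by rw [if_neg (hee u hu).1, if_neg (hee u hu).2.1])]
      rw [sum_insert_split hbs (fun u => w u • u),
        ← Finset.add_sum_erase _ (fun u => w u • u) hv₂e] at hwx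
      rw [← hwx, hb]
      module
    · dsimp only
      rw [if_pos rfl, if_neg (Ne.symm hne), if_pos rfl]; linarith
  · rintro ⟨Q, hQ0, hQ1, hQx, hQle⟩
    have hQv₁ : 0 ≤ Q v₁ := hQ0 v₁ hv₁
    refine Finset.mem_convexHull'.2
      ⟨fun u => if u = b then 2 * Q v₁ else if u = v₂ then Q v₂ - Q v₁ else Q u, ?_, ?_, ?_⟩
    · intro u hu
      dsimp only
      rcases Finset.mem_insert.1 hu with h | h
      · rw [if_pos h]; linarith
      · have hub : u ≠ b := fun e => hbs (e ▸ Finset.mem_of_mem_erase h)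
        rw [if_neg hub]
        by_cases h2 : u = v₂
        · rw [if_pos h2]; linarith
        · rw [if_neg h2]; exact hQ0 u (Finset.mem_of_mem_erase h)
    · dsimp only
      rw [sum_insert_split hbs, if_pos rfl,
        ← Finset.add_sum_erase _ _ hv₂e, if_neg hbne.2.symm, if_pos rfl,
        Finset.sum_congr rfl (fun u hu => by rw [if_neg (hee u hu).2.2.2, if_neg (hee u hu).2.1])]
      rw [sum_split hv₁ hv₂ hne Q] at hQ1
      linarith
    · dsimp only
      rw [sum_insert_split hbs (fun u => _ • u),
        if_pos rfl, ← Finset.add_sum_erase _ (fun u => _ • u) hv₂e, if_neg hbne.2.symm,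
        if_pos rfl,
        Finset.sum_congr rfl (fun u hu => by rw [if_neg (hee u hu).2.2.2, if_neg (hee u hu).2.1])]
      rw [sum_split hv₁ hv₂ hne (fun u => Q u • u)] at hQx
      rw [← hQx, hb]
      module

end StellarAux

namespace StellarAux

variable {E : Type*} [AddCommGroup E] [Module ℝ E] [DecidableEq E]

lemma affineIndependent_of_weights {t : Finset E}
    (h : ∀ w : E → ℝ, ∑ x ∈ t, w x = 0 → ∑ x ∈ t, w x • x = 0 → ∀ x ∈ t, w x = 0) :
    AffineIndependent ℝ ((↑) : t → E) := by
  by_contra hcon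
  obtain ⟨f, hf1, hf2, x, hx, hfx⟩ := exists_nontrivial_relation_sum_zero_of_not_affine_ind hcon
  exact hfx (h f hf2 hf1 x hx)

lemma indep_mono {t u : Finset E} (hu : AffineIndependent ℝ ((↑) : u → E)) (hsub : t ⊆ u) :
    AffineIndependent ℝ ((↑) : t → E) := by
  apply affineIndependent_of_weights
  intro w hw0 hws x hx
  have h1 : ∑ y ∈ u, (if y ∈ t then w y else 0) = 0 := by
    rw [Finset.sum_ite_mem, Finset.inter_eq_right.2 hsub]; exact hw0
  have h2 : ∑ y ∈ u, (if y ∈ t then w y else 0) • y = 0 := by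
    simp only [ite_smul, zero_smul]
    rw [Finset.sum_ite_mem, Finset.inter_eq_right.2 hsub]; exact hws
  have := hu.eq_zero_of_sum_eq_zero_subtype h1 h2 x (hsub hx)
  simpa [hx] using this

lemma indep_A {v₁ v₂ b : E} (hne : v₁ ≠ v₂) (hb : b = (1 / 2 : ℝ) • (v₁ + v₂))
    {s : Finset E} (hs : AffineIndependent ℝ ((↑) : s → E))
    (hv₁ : v₁ ∈ s) (hv₂ : v₂ ∈ s) (hbs : b ∉ s) :
    AffineIndependent ℝ ((↑) : (insert b (s.erase v₁) : Finset E) → E) := by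
  have hbne := b_ne hne hb
  have hv₂e : v₂ ∈ s.erase v₁ := Finset.mem_erase.2 ⟨hne.symm, hv₂⟩
  have hee : ∀ u ∈ (s.erase v₁).erase v₂, u ≠ v₁ ∧ u ≠ v₂ ∧ u ∈ s ∧ u ≠ b := by
    intro u hu
    have h2 := Finset.mem_erase.1 hu
    have h1 := Finset.mem_erase.1 h2.2
    exact ⟨h1.1, h2.1, h1.2, fun e => hbs (e ▸ h1.2)⟩
  apply affineIndependent_of_weights
  intro w hw0 hws x hx
  have hW0 : ∑ u ∈ s, (if u = v₁ then w b / 2 else if u = v₂ then w u + w b / 2 else w u) = 0 := by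
    rw [sum_split hv₁ hv₂ hne, if_pos rfl, if_neg (Ne.symm hne), if_pos rfl,
      Finset.sum_congr rfl (fun u hu => by rw [if_neg (hee u hu).1, if_neg (hee u hu).2.1])]
    rw [sum_insert_split hbs w, ← Finset.add_sum_erase _ w hv₂e] at hw0
    linarith
  have hWs : ∑ u ∈ s, (if u = v₁ then w b / 2 else if u = v₂ then w u + w b / 2 else w u) • u
      = 0 := by
    rw [sum_split hv₁ hv₂ hne (fun u => _ • u), if_pos rfl, if_neg (Ne.symm hne), if_pos rfl,
      Finset.sum_congr rfl (fun u hu => by rw [if_neg (hee u hu).1, if_neg (hee u hu).2.1])]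
    rw [sum_insert_split hbs (fun u => w u • u),
      ← Finset.add_sum_erase _ (fun u => w u • u) hv₂e] at hws
    rw [← hws, hb]
    module
  have hz := hs.eq_zero_of_sum_eq_zero_subtype hW0 hWs
  have hwb : w b = 0 := by
    have := hz v₁ hv₁
    rw [if_pos rfl] at this
    linarith
  rcases Finset.mem_insert.1 hx with rfl | hxe
  · exact hwb
  · have hxs := Finset.mem_of_mem_erase hxe
    have hxv₁ := (Finset.mem_erase.1 hxe).1
    by_cases h2 : x = v₂
    · have := hz x hxs
      rw [if_neg hxv₁, if_pos h2] at this
      linarith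
    · have := hz x hxs
      rwa [if_neg hxv₁, if_neg h2] at this

lemma hull_A_subset {v₁ v₂ b : E} (hb : b = (1 / 2 : ℝ) • (v₁ + v₂))
    {s : Finset E} (hv₁ : v₁ ∈ s) (hv₂ : v₂ ∈ s) :
    convexHull ℝ (↑(insert b (s.erase v₁)) : Set E) ⊆ convexHull ℝ (↑s : Set E) := by
  apply convexHull_min ?_ (convex_convexHull ℝ _)
  intro u hu
  rcases Finset.mem_insert.1 (Finset.mem_coe.1 hu) with rfl | h
  · have h1 : v₁ ∈ convexHull ℝ (↑s : Set E) := subset_convexHull ℝ _ (Finset.mem_coe.2 hv₁)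
    have h2 : v₂ ∈ convexHull ℝ (↑s : Set E) := subset_convexHull ℝ _ (Finset.mem_coe.2 hv₂)
    have h3 := (convex_convexHull ℝ (↑s : Set E)) h1 h2 (by norm_num : (0:ℝ) ≤ 1/2)
      (by norm_num : (0:ℝ) ≤ 1/2) (by norm_num : (1/2 : ℝ) + 1/2 = 1)
    rw [hb, smul_add]
    exact h3
  · exact subset_convexHull ℝ _ (Finset.mem_coe.2 (Finset.mem_of_mem_erase h))

lemma hull_subset_union {v₁ v₂ b : E} (hne : v₁ ≠ v₂) (hb : b = (1 / 2 : ℝ) • (v₁ + v₂))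
    {s : Finset E} (hv₁ : v₁ ∈ s) (hv₂ : v₂ ∈ s) (hbs : b ∉ s) :
    convexHull ℝ (↑s : Set E) ⊆
      convexHull ℝ (↑(insert b (s.erase v₁)) : Set E) ∪
        convexHull ℝ (↑(insert b (s.erase v₂)) : Set E) := by
  intro x hx
  obtain ⟨p, hp0, hp1, hpx⟩ := Finset.mem_convexHull'.1 hx
  rcases le_total (p v₁) (p v₂) with h | h
  · exact Or.inl ((mem_A_iff hne hb hv₁ hv₂ hbs).2 ⟨p, hp0, hp1, hpx, h⟩)
  · exact Or.inr ((mem_A_iff hne.symm (by rw [hb, add_comm]) hv₂ hv₁ hbs).2 ⟨p, hp0, hp1, hpx, h⟩)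

end StellarAux

namespace StellarAux

variable {E : Type*} [AddCommGroup E] [Module ℝ E] [DecidableEq E]

lemma hull_inter_A {v₁ v₂ b : E} (hne : v₁ ≠ v₂) (hb : b = (1 / 2 : ℝ) • (v₁ + v₂))
    {s r : Finset E} (hs : AffineIndependent ℝ ((↑) : s → E))
    (hv₁ : v₁ ∈ s) (hv₂ : v₂ ∈ s) (hbs : b ∉ s) (hrs : r ⊆ s)
    (hredge : ¬(v₁ ∈ r ∧ v₂ ∈ r)) :
    convexHull ℝ (↑r : Set E) ∩ convexHull ℝ (↑(insert b (s.erase v₁)) : Set E) ⊆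
      convexHull ℝ (↑(r.erase v₁) : Set E) := by
  rintro x ⟨hxr, hxA⟩
  by_cases hv₁r : v₁ ∈ r
  · have hv₂r : v₂ ∉ r := fun h => hredge ⟨hv₁r, h⟩
    obtain ⟨p, hp0, hp1, hpx⟩ := Finset.mem_convexHull'.1 hxr
    obtain ⟨Q, hQ0, hQ1, hQx, hQle⟩ := (mem_A_iff hne hb hv₁ hv₂ hbs).1 hxA
    have hP1 : ∑ u ∈ s, (if u ∈ r then p u else 0) = 1 := by
      rw [Finset.sum_ite_mem, Finset.inter_eq_right.2 hrs]; exact hp1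
    have hPx : ∑ u ∈ s, (if u ∈ r then p u else 0) • u = x := by
      simp only [ite_smul, zero_smul]
      rw [Finset.sum_ite_mem, Finset.inter_eq_right.2 hrs]; exact hpx
    have heq := hs.eq_of_sum_eq_sum_subtype
      (w₁ := fun u => if u ∈ r then p u else 0) (w₂ := Q)
      (hP1.trans hQ1.symm) (hPx.trans hQx.symm)
    have hQ2 : Q v₂ = 0 := by
      have := heq v₂ hv₂; rw [if_neg hv₂r] at this; exact this.symm
    have hQv₁0 : Q v₁ = 0 := le_antisymm (hQ2 ▸ hQle) (hQ0 v₁ hv₁)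
    have hpv₁ : p v₁ = 0 := by
      have := heq v₁ hv₁; rw [if_pos hv₁r] at this; rw [this, hQv₁0]
    refine Finset.mem_convexHull'.2 ⟨p, fun y hy => hp0 y (Finset.mem_of_mem_erase hy), ?_, ?_⟩
    · have h := Finset.add_sum_erase r p hv₁r
      rw [hpv₁, zero_add] at h
      rw [h, hp1]
    · have h : p v₁ • v₁ + ∑ y ∈ r.erase v₁, p y • y = ∑ y ∈ r, p y • y :=
        Finset.add_sum_erase r (fun u => p u • u) hv₁r
      rw [hpv₁, zero_smul, zero_add] at h
      rw [h, hpx]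
  · rw [Finset.erase_eq_of_notMem hv₁r]; exact hxr

lemma hull_inter_A_edge {v₁ v₂ b : E} (hne : v₁ ≠ v₂) (hb : b = (1 / 2 : ℝ) • (v₁ + v₂))
    {s r : Finset E} (hs : AffineIndependent ℝ ((↑) : s → E))
    (hv₁ : v₁ ∈ s) (hv₂ : v₂ ∈ s) (hbs : b ∉ s) (hrs : r ⊆ s)
    (hv₁r : v₁ ∈ r) (hv₂r : v₂ ∈ r) :
    convexHull ℝ (↑r : Set E) ∩ convexHull ℝ (↑(insert b (s.erase v₁)) : Set E) ⊆
      convexHull ℝ (↑(insert b (r.erase v₁)) : Set E) := by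
  rintro x ⟨hxr, hxA⟩
  obtain ⟨p, hp0, hp1, hpx⟩ := Finset.mem_convexHull'.1 hxr
  obtain ⟨Q, hQ0, hQ1, hQx, hQle⟩ := (mem_A_iff hne hb hv₁ hv₂ hbs).1 hxA
  have hbr : b ∉ r := fun h => hbs (hrs h)
  have hP1 : ∑ u ∈ s, (if u ∈ r then p u else 0) = 1 := by
    rw [Finset.sum_ite_mem, Finset.inter_eq_right.2 hrs]; exact hp1
  have hPx : ∑ u ∈ s, (if u ∈ r then p u else 0) • u = x := by
    simp only [ite_smul, zero_smul]
    rw [Finset.sum_ite_mem, Finset.inter_eq_right.2 hrs]; exact hpx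
  have heq := hs.eq_of_sum_eq_sum_subtype
    (w₁ := fun u => if u ∈ r then p u else 0) (w₂ := Q)
    (hP1.trans hQ1.symm) (hPx.trans hQx.symm)
  have e1 := heq v₁ hv₁
  rw [if_pos hv₁r] at e1
  have e2 := heq v₂ hv₂
  rw [if_pos hv₂r] at e2
  exact (mem_A_iff hne hb hv₁r hv₂r hbr).2 ⟨p, hp0, hp1, hpx, by rw [e1, e2]; exact hQle⟩

lemma A_inter_A {v₁ v₂ b : E} (hne : v₁ ≠ v₂) (hb : b = (1 / 2 : ℝ) • (v₁ + v₂))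
    {s : Finset E} (hs : AffineIndependent ℝ ((↑) : s → E))
    (hv₁ : v₁ ∈ s) (hv₂ : v₂ ∈ s) (hbs : b ∉ s) :
    convexHull ℝ (↑(insert b (s.erase v₁)) : Set E) ∩
        convexHull ℝ (↑(insert b (s.erase v₂)) : Set E) ⊆
      convexHull ℝ (↑(insert b ((s.erase v₁).erase v₂)) : Set E) := by
  rintro x ⟨h1, h2⟩
  obtain ⟨Q, hQ0, hQ1, hQx, hQle⟩ := (mem_A_iff hne hb hv₁ hv₂ hbs).1 h1
  obtain ⟨Q', hQ'0, hQ'1, hQ'x, hQ'le⟩ :=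
    (mem_A_iff hne.symm (by rw [hb, add_comm]) hv₂ hv₁ hbs).1 h2
  have heq := hs.eq_of_sum_eq_sum_subtype (w₁ := Q) (w₂ := Q')
    (hQ1.trans hQ'1.symm) (hQx.trans hQ'x.symm)
  have hQeq : Q v₁ = Q v₂ :=
    le_antisymm hQle (by rw [heq v₁ hv₁, heq v₂ hv₂]; exact hQ'le)
  have hbe : b ∉ (s.erase v₁).erase v₂ :=
    fun h => hbs (Finset.mem_of_mem_erase (Finset.mem_of_mem_erase h))
  have hee : ∀ u ∈ (s.erase v₁).erase v₂, u ≠ b ∧ u ∈ s := by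
    intro u hu
    have hus := Finset.mem_of_mem_erase (Finset.mem_of_mem_erase hu)
    exact ⟨fun e => hbs (e ▸ hus), hus⟩
  refine Finset.mem_convexHull'.2 ⟨fun u => if u = b then 2 * Q v₁ else Q u, ?_, ?_, ?_⟩
  · intro u hu
    dsimp only
    rcases Finset.mem_insert.1 hu with h | h
    · rw [if_pos h]
      have := hQ0 v₁ hv₁; linarith
    · rw [if_neg (hee u h).1]
      exact hQ0 u (hee u h).2
  · dsimp only
    rw [Finset.sum_insert hbe, if_pos rfl,
      Finset.sum_congr rfl (fun u hu => by rw [if_neg (hee u hu).1])]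
    rw [sum_split hv₁ hv₂ hne Q] at hQ1
    linarith
  · dsimp only
    rw [Finset.sum_insert hbe, if_pos rfl,
      Finset.sum_congr rfl (fun u hu => by rw [if_neg (hee u hu).1])]
    rw [sum_split hv₁ hv₂ hne (fun u => Q u • u)] at hQx
    rw [← hQx, ← hQeq, hb]
    module

lemma glue_reduce {t T t' T' : Finset E}
    (hT : AffineIndependent ℝ ((↑) : T → E)) (hT' : AffineIndependent ℝ ((↑) : T' → E))
    (htT : t ⊆ T) (ht'T' : t' ⊆ T')
    (hglue : convexHull ℝ (↑T : Set E) ∩ convexHull ℝ (↑T' : Set E) ⊆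
      convexHull ℝ (↑(T ∩ T') : Set E)) :
    convexHull ℝ (↑t : Set E) ∩ convexHull ℝ (↑t' : Set E) ⊆
      convexHull ℝ (↑(t ∩ t') : Set E) := by
  rintro x ⟨hx1, hx2⟩
  have h1 : x ∈ convexHull ℝ (↑(T ∩ T') : Set E) :=
    hglue ⟨convexHull_mono (Finset.coe_subset.2 htT) hx1,
      convexHull_mono (Finset.coe_subset.2 ht'T') hx2⟩
  have h2 : x ∈ convexHull ℝ (↑(t ∩ (T ∩ T')) : Set E) := by
    rw [Finset.coe_inter, hT.convexHull_inter htT Finset.inter_subset_left]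
    exact ⟨hx1, h1⟩
  have e1 : t ∩ (T ∩ T') = t ∩ T' := by
    rw [← Finset.inter_assoc, Finset.inter_eq_left.2 htT]
  rw [e1] at h2
  have h3 : x ∈ convexHull ℝ (↑((t ∩ T') ∩ t') : Set E) := by
    rw [Finset.coe_inter, hT'.convexHull_inter Finset.inter_subset_right ht'T']
    exact ⟨h2, hx2⟩
  have e2 : (t ∩ T') ∩ t' = t ∩ t' := by
    rw [Finset.inter_assoc, Finset.inter_eq_right.2 ht'T']
  rwa [e2] at h3

end StellarAux

namespace StellarAux

variable {E : Type*} [AddCommGroup E] [Module ℝ E] [DecidableEq E]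

lemma old_new {v₁ v₂ b : E} (hne : v₁ ≠ v₂) (hb : b = (1 / 2 : ℝ) • (v₁ + v₂))
    {t s : Finset E} (hs : AffineIndependent ℝ ((↑) : s → E))
    (hv₁ : v₁ ∈ s) (hv₂ : v₂ ∈ s) (hbs : b ∉ s)
    (hnedge : ¬(v₁ ∈ t ∧ v₂ ∈ t))
    (hinter : convexHull ℝ (↑t : Set E) ∩ convexHull ℝ (↑s : Set E) ⊆
      convexHull ℝ (↑(t ∩ s) : Set E)) :
    convexHull ℝ (↑t : Set E) ∩ convexHull ℝ (↑(insert b (s.erase v₁)) : Set E) ⊆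
      convexHull ℝ (↑(t ∩ insert b (s.erase v₁)) : Set E) := by
  rintro x ⟨h1, h2⟩
  have hxts : x ∈ convexHull ℝ (↑(t ∩ s) : Set E) :=
    hinter ⟨h1, hull_A_subset hb hv₁ hv₂ h2⟩
  have h3 : x ∈ convexHull ℝ (↑((t ∩ s).erase v₁) : Set E) :=
    hull_inter_A hne hb hs hv₁ hv₂ hbs Finset.inter_subset_right
      (fun h => hnedge ⟨(Finset.mem_inter.1 h.1).1, (Finset.mem_inter.1 h.2).1⟩) ⟨hxts, h2⟩
  refine convexHull_mono (Finset.coe_subset.2 ?_) h3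
  intro u hu
  have h4 := Finset.mem_erase.1 hu
  have h5 := Finset.mem_inter.1 h4.2
  exact Finset.mem_inter.2 ⟨h5.1,
    Finset.mem_insert_of_mem (Finset.mem_erase.2 ⟨h4.1, h5.2⟩)⟩

lemma new_new_same {v₁ v₂ b : E} (hne : v₁ ≠ v₂) (hb : b = (1 / 2 : ℝ) • (v₁ + v₂))
    {s s' : Finset E} (hs : AffineIndependent ℝ ((↑) : s → E))
    (hv₁ : v₁ ∈ s) (hv₂ : v₂ ∈ s) (hbs : b ∉ s)
    (hv₁' : v₁ ∈ s') (hv₂' : v₂ ∈ s')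
    (hinter : convexHull ℝ (↑s : Set E) ∩ convexHull ℝ (↑s' : Set E) ⊆
      convexHull ℝ (↑(s ∩ s') : Set E)) :
    convexHull ℝ (↑(insert b (s.erase v₁)) : Set E) ∩
        convexHull ℝ (↑(insert b (s'.erase v₁)) : Set E) ⊆
      convexHull ℝ (↑(insert b (s.erase v₁) ∩ insert b (s'.erase v₁)) : Set E) := by
  rintro x ⟨h1, h2⟩
  have hxr : x ∈ convexHull ℝ (↑(s ∩ s') : Set E) :=
    hinter ⟨hull_A_subset hb hv₁ hv₂ h1, hull_A_subset hb hv₁' hv₂' h2⟩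
  have hA1 : x ∈ convexHull ℝ (↑(insert b ((s ∩ s').erase v₁)) : Set E) :=
    hull_inter_A_edge hne hb hs hv₁ hv₂ hbs Finset.inter_subset_left
      (Finset.mem_inter.2 ⟨hv₁, hv₁'⟩) (Finset.mem_inter.2 ⟨hv₂, hv₂'⟩) ⟨hxr, h1⟩
  refine convexHull_mono (Finset.coe_subset.2 ?_) hA1
  intro u hu
  rcases Finset.mem_insert.1 hu with rfl | h
  · exact Finset.mem_inter.2 ⟨Finset.mem_insert_self _ _, Finset.mem_insert_self _ _⟩
  · have h4 := Finset.mem_erase.1 h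
    have h5 := Finset.mem_inter.1 h4.2
    exact Finset.mem_inter.2
      ⟨Finset.mem_insert_of_mem (Finset.mem_erase.2 ⟨h4.1, h5.1⟩),
        Finset.mem_insert_of_mem (Finset.mem_erase.2 ⟨h4.1, h5.2⟩)⟩

lemma new_new_diff {v₁ v₂ b : E} (hne : v₁ ≠ v₂) (hb : b = (1 / 2 : ℝ) • (v₁ + v₂))
    {s s' : Finset E} (hs : AffineIndependent ℝ ((↑) : s → E))
    (hs' : AffineIndependent ℝ ((↑) : s' → E))
    (hv₁ : v₁ ∈ s) (hv₂ : v₂ ∈ s) (hbs : b ∉ s)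
    (hv₁' : v₁ ∈ s') (hv₂' : v₂ ∈ s') (hbs' : b ∉ s')
    (hinter : convexHull ℝ (↑s : Set E) ∩ convexHull ℝ (↑s' : Set E) ⊆
      convexHull ℝ (↑(s ∩ s') : Set E)) :
    convexHull ℝ (↑(insert b (s.erase v₁)) : Set E) ∩
        convexHull ℝ (↑(insert b (s'.erase v₂)) : Set E) ⊆
      convexHull ℝ (↑(insert b (s.erase v₁) ∩ insert b (s'.erase v₂)) : Set E) := by
  rintro x ⟨h1, h2⟩
  have hb' : b = (1 / 2 : ℝ) • (v₂ + v₁) := by rw [hb, add_comm]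
  have hr : AffineIndependent ℝ ((↑) : (s ∩ s' : Finset E) → E) :=
    indep_mono hs Finset.inter_subset_left
  have hv₁r : v₁ ∈ s ∩ s' := Finset.mem_inter.2 ⟨hv₁, hv₁'⟩
  have hv₂r : v₂ ∈ s ∩ s' := Finset.mem_inter.2 ⟨hv₂, hv₂'⟩
  have hbr : b ∉ s ∩ s' := fun h => hbs (Finset.mem_inter.1 h).1
  have hxr : x ∈ convexHull ℝ (↑(s ∩ s') : Set E) :=
    hinter ⟨hull_A_subset hb hv₁ hv₂ h1, hull_A_subset hb' hv₂' hv₁' h2⟩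
  have hA1 : x ∈ convexHull ℝ (↑(insert b ((s ∩ s').erase v₁)) : Set E) :=
    hull_inter_A_edge hne hb hs hv₁ hv₂ hbs Finset.inter_subset_left hv₁r hv₂r ⟨hxr, h1⟩
  have hA2 : x ∈ convexHull ℝ (↑(insert b ((s ∩ s').erase v₂)) : Set E) :=
    hull_inter_A_edge hne.symm hb' hs' hv₂' hv₁' hbs' Finset.inter_subset_right
      hv₂r hv₁r ⟨hxr, h2⟩
  have hK5 : x ∈ convexHull ℝ (↑(insert b (((s ∩ s').erase v₁).erase v₂)) : Set E) :=
    A_inter_A hne hb hr hv₁r hv₂r hbr ⟨hA1, hA2⟩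
  refine convexHull_mono (Finset.coe_subset.2 ?_) hK5
  intro u hu
  rcases Finset.mem_insert.1 hu with rfl | h
  · exact Finset.mem_inter.2 ⟨Finset.mem_insert_self _ _, Finset.mem_insert_self _ _⟩
  · have h4 := Finset.mem_erase.1 h
    have h5 := Finset.mem_erase.1 h4.2
    have h6 := Finset.mem_inter.1 h5.2
    exact Finset.mem_inter.2
      ⟨Finset.mem_insert_of_mem (Finset.mem_erase.2 ⟨h5.1, h6.1⟩),
        Finset.mem_insert_of_mem (Finset.mem_erase.2 ⟨h4.1, h6.2⟩)⟩

end StellarAux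


/-- Stellar subdivision of an edge of a convex triangulation of a polytope: subdividing
the edge `v₁v₂` at its barycenter `b` yields a convex triangulation of the same polytope
whose vertex set is `V(X) ∪ {b}`; its faces are the old faces not containing the edge
`v₁v₂`, together with the faces obtained by replacing `v₁` (resp. `v₂`) by `b` in the
faces containing the edge (and the subfaces thereof). -/
theorem stellar_subdivision {E : Type*} [AddCommGroup E] [Module ℝ E] [DecidableEq E]
    (X : SimplicialComplex ℝ E)
    (W : Finset E) (hspace : X.space = convexHull ℝ ↑W)
    (v₁ v₂ : E) (hne : v₁ ≠ v₂) (hedge : {v₁, v₂} ∈ X.faces)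
    (b : E) (hb : b = (1 / 2 : ℝ) • (v₁ + v₂)) :
    ∃ X' : SimplicialComplex ℝ E,
      X'.space = X.space ∧
      X'.vertices = X.vertices ∪ {b} ∧
      (∀ s ∈ X.faces, ¬({v₁, v₂} ⊆ s) → s ∈ X'.faces) ∧
      (∀ s ∈ X.faces, {v₁, v₂} ⊆ s →
        insert b (s.erase v₁) ∈ X'.faces ∧ insert b (s.erase v₂) ∈ X'.faces) ∧
      (∀ t ∈ X'.faces,
        (t ∈ X.faces ∧ ¬({v₁, v₂} ⊆ t)) ∨
        ∃ s ∈ X.faces, {v₁, v₂} ⊆ s ∧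
          (t ⊆ insert b (s.erase v₁) ∨ t ⊆ insert b (s.erase v₂))) := by
  classical
  have hbne := StellarAux.b_ne hne hb
  have hb' : b = (1 / 2 : ℝ) • (v₂ + v₁) := by rw [hb, add_comm]
  -- edge subset characterization
  have hes : ∀ {s : Finset E}, ({v₁, v₂} : Finset E) ⊆ s ↔ v₁ ∈ s ∧ v₂ ∈ s := by
    intro s
    simp [Finset.insert_subset_iff]
  -- b is not a vertex of any face
  have hbf : ∀ s ∈ X.faces, b ∉ s := by
    intro s hs hbsmem
    have hbv : b ∈ X.vertices :=
      SimplicialComplex.mem_vertices.2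
        (X.down_closed hs (Finset.singleton_subset_iff.2 hbsmem) (Finset.singleton_nonempty _))
    have hbm : b ∈ convexHull ℝ (↑({v₁, v₂} : Finset E) : Set E) := by
      refine Finset.mem_convexHull'.2 ⟨fun _ => (1/2 : ℝ), fun y _ => by norm_num, ?_, ?_⟩
      · rw [Finset.sum_pair hne]; norm_num
      · rw [Finset.sum_pair hne, hb]; module
    have := (SimplicialComplex.vertex_mem_convexHull_iff hbv hedge).1 hbm
    rcases Finset.mem_insert.1 this with h | h
    · exact hbne.1 h
    · exact hbne.2 (Finset.mem_singleton.1 h)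
  have hfne : ∀ {s : Finset E}, s ∈ X.faces → s ≠ ∅ := by
    intro s hs h
    exact X.empty_notMem (h ▸ hs)
  -- the new face set
  set Fc : Set (Finset E) :=
    {t : Finset E | t ≠ ∅ ∧ ((t ∈ X.faces ∧ ¬({v₁, v₂} : Finset E) ⊆ t) ∨
      ∃ s ∈ X.faces, ({v₁, v₂} : Finset E) ⊆ s ∧ b ∈ t ∧
        (t ⊆ insert b (s.erase v₁) ∨ t ⊆ insert b (s.erase v₂)))} with hFc
  -- generators
  set Gen : Finset E → Prop := fun T =>
    (T ∈ X.faces ∧ ¬({v₁, v₂} : Finset E) ⊆ T) ∨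
      (∃ s ∈ X.faces, ({v₁, v₂} : Finset E) ⊆ s ∧
        (T = insert b (s.erase v₁) ∨ T = insert b (s.erase v₂))) with hGen
  have gen_indep : ∀ T, Gen T → AffineIndependent ℝ ((↑) : T → E) := by
    intro T hT
    rcases hT with ⟨hTf, _⟩ | ⟨s, hs, hesub, h | h⟩
    · exact X.indep hTf
    · subst h
      exact StellarAux.indep_A hne hb (X.indep hs) (hes.1 hesub).1 (hes.1 hesub).2 (hbf s hs)
    · subst h
      exact StellarAux.indep_A hne.symm hb' (X.indep hs) (hes.1 hesub).2 (hes.1 hesub).1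
        (hbf s hs)
  have hXinter : ∀ {t s : Finset E}, t ∈ X.faces → s ∈ X.faces →
      convexHull ℝ (↑t : Set E) ∩ convexHull ℝ (↑s : Set E) ⊆
        convexHull ℝ (↑(t ∩ s) : Set E) := by
    intro t s ht hs
    rw [Finset.coe_inter]
    exact X.inter_subset_convexHull ht hs
  have gen_glue : ∀ T T', Gen T → Gen T' →
      convexHull ℝ (↑T : Set E) ∩ convexHull ℝ (↑T' : Set E) ⊆
        convexHull ℝ (↑(T ∩ T') : Set E) := by
    have symm_case : ∀ {T T' : Finset E},
        (convexHull ℝ (↑T : Set E) ∩ convexHull ℝ (↑T' : Set E) ⊆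
          convexHull ℝ (↑(T ∩ T') : Set E)) →
        convexHull ℝ (↑T' : Set E) ∩ convexHull ℝ (↑T : Set E) ⊆
          convexHull ℝ (↑(T' ∩ T) : Set E) := by
      intro T T' h
      rw [Set.inter_comm, Finset.inter_comm]
      exact h
    have old_new_case : ∀ {t s : Finset E}, t ∈ X.faces → ¬({v₁, v₂} : Finset E) ⊆ t →
        s ∈ X.faces → ({v₁, v₂} : Finset E) ⊆ s → ∀ T', (T' = insert b (s.erase v₁) ∨
          T' = insert b (s.erase v₂)) →
        convexHull ℝ (↑t : Set E) ∩ convexHull ℝ (↑T' : Set E) ⊆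
          convexHull ℝ (↑(t ∩ T') : Set E) := by
      intro t s ht hnet hs hesub T' hT'
      have hnedge : ¬(v₁ ∈ t ∧ v₂ ∈ t) := fun h => hnet (hes.2 h)
      rcases hT' with rfl | rfl
      · exact StellarAux.old_new hne hb (X.indep hs) (hes.1 hesub).1 (hes.1 hesub).2
          (hbf s hs) hnedge (hXinter ht hs)
      · exact StellarAux.old_new hne.symm hb' (X.indep hs) (hes.1 hesub).2 (hes.1 hesub).1
          (hbf s hs) (fun h => hnedge ⟨h.2, h.1⟩) (hXinter ht hs)
    intro T T' hT hT'
    rcases hT with ⟨hTf, hTnet⟩ | ⟨s, hs, hesub, hTA⟩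
    · rcases hT' with ⟨hT'f, _⟩ | ⟨s', hs', hesub', hT'A⟩
      · exact hXinter hTf hT'f
      · exact old_new_case hTf hTnet hs' hesub' T' hT'A
    · rcases hT' with ⟨hT'f, hT'net⟩ | ⟨s', hs', hesub', hT'A⟩
      · exact symm_case (old_new_case hT'f hT'net hs hesub T hTA)
      · obtain ⟨hv₁s, hv₂s⟩ := hes.1 hesub
        obtain ⟨hv₁s', hv₂s'⟩ := hes.1 hesub'
        rcases hTA with rfl | rfl <;> rcases hT'A with rfl | rfl
        · exact StellarAux.new_new_same hne hb (X.indep hs) hv₁s hv₂s (hbf s hs)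
            hv₁s' hv₂s' (hXinter hs hs')
        · exact StellarAux.new_new_diff hne hb (X.indep hs) (X.indep hs')
            hv₁s hv₂s (hbf s hs) hv₁s' hv₂s' (hbf s' hs') (hXinter hs hs')
        · exact StellarAux.new_new_diff hne.symm hb' (X.indep hs) (X.indep hs')
            hv₂s hv₁s (hbf s hs) hv₂s' hv₁s' (hbf s' hs') (hXinter hs hs')
        · exact StellarAux.new_new_same hne.symm hb' (X.indep hs) hv₂s hv₁s (hbf s hs)
            hv₂s' hv₁s' (hXinter hs hs')
  have get_gen : ∀ t ∈ Fc, ∃ T, t ⊆ T ∧ Gen T := by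
    rintro t ⟨-, ⟨htf, htnet⟩ | ⟨s, hs, hesub, -, hsub⟩⟩
    · exact ⟨t, subset_rfl, Or.inl ⟨htf, htnet⟩⟩
    · rcases hsub with h | h
      · exact ⟨insert b (s.erase v₁), h, Or.inr ⟨s, hs, hesub, Or.inl rfl⟩⟩
      · exact ⟨insert b (s.erase v₂), h, Or.inr ⟨s, hs, hesub, Or.inr rfl⟩⟩
  -- build the complex
  refine ⟨⟨⟨Fc, fun s hs => ⟨Finset.nonempty_iff_ne_empty.2 fun h => (?ne : ∅ ∉ Fc) (h ▸ hs),
    fun t hts htne => (?dc : ∀ s t, s ∈ Fc → t ⊆ s → t ≠ ∅ → t ∈ Fc) s t hs hts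
      (Finset.nonempty_iff_ne_empty.1 htne)⟩⟩, ?indep, ?inter⟩, ?_, ?_, ?_, ?_, ?_⟩
  · -- not_empty_mem
    exact fun h => h.1 rfl
  swap
  · -- indep
    intro t ht
    obtain ⟨T, htT, hgT⟩ := get_gen t ht
    exact StellarAux.indep_mono (gen_indep T hgT) htT
  · -- down_closed
    rintro s t ⟨-, hs⟩ hts htne
    refine ⟨htne, ?_⟩
    rcases hs with ⟨hsf, hsnet⟩ | ⟨u, hu, huedge, hbs, hsub⟩
    · exact Or.inl ⟨X.down_closed hsf hts (Finset.nonempty_iff_ne_empty.2 htne), fun hc => hsnet (hc.trans hts)⟩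
    · by_cases hbt : b ∈ t
      · exact Or.inr ⟨u, hu, huedge, hbt, hsub.imp hts.trans hts.trans⟩
      · have key : ∀ v : E, s ⊆ insert b (u.erase v) → t ⊆ u.erase v := by
          intro v hv y hy
          exact (Finset.mem_insert.1 (hv (hts hy))).resolve_left (fun e => hbt (e ▸ hy))
        refine Or.inl ?_
        rcases hsub with h | h
        · refine ⟨X.down_closed hu ((key v₁ h).trans (Finset.erase_subset _ _))
              (Finset.nonempty_iff_ne_empty.2 htne),
            fun hc => ?_⟩
          exact (Finset.mem_erase.1 (key v₁ h (hc (Finset.mem_insert_self _ _)))).1 rfl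
        · refine ⟨X.down_closed hu ((key v₂ h).trans (Finset.erase_subset _ _))
              (Finset.nonempty_iff_ne_empty.2 htne),
            fun hc => ?_⟩
          exact (Finset.mem_erase.1 (key v₂ h (hc
            (Finset.mem_insert_of_mem (Finset.mem_singleton_self _))))).1 rfl
  · -- inter_subset_convexHull
    intro t t' ht ht'
    obtain ⟨T, htT, hgT⟩ := get_gen t ht
    obtain ⟨T', htT', hgT'⟩ := get_gen t' ht'
    rw [← Finset.coe_inter]
    exact StellarAux.glue_reduce (gen_indep T hgT) (gen_indep T' hgT') htT htT'
      (gen_glue T T' hgT hgT')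
  · -- space
    apply Set.Subset.antisymm
    · intro x hx
      rw [SimplicialComplex.mem_space_iff] at hx ⊢
      obtain ⟨t, ht, hxt⟩ := hx
      rcases ht.2 with ⟨htf, -⟩ | ⟨s, hs, hesub, -, hsub⟩
      · exact ⟨t, htf, hxt⟩
      · refine ⟨s, hs, ?_⟩
        rcases hsub with h | h
        · exact StellarAux.hull_A_subset hb (hes.1 hesub).1 (hes.1 hesub).2
            (convexHull_mono (Finset.coe_subset.2 h) hxt)
        · exact StellarAux.hull_A_subset hb' (hes.1 hesub).2 (hes.1 hesub).1
            (convexHull_mono (Finset.coe_subset.2 h) hxt)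
    · intro x hx
      rw [SimplicialComplex.mem_space_iff] at hx ⊢
      obtain ⟨u, hu, hxu⟩ := hx
      by_cases hedgeu : ({v₁, v₂} : Finset E) ⊆ u
      · rcases StellarAux.hull_subset_union hne hb (hes.1 hedgeu).1 (hes.1 hedgeu).2
          (hbf u hu) hxu with h | h
        · exact ⟨insert b (u.erase v₁), ⟨Finset.insert_ne_empty _ _,
            Or.inr ⟨u, hu, hedgeu, Finset.mem_insert_self _ _, Or.inl subset_rfl⟩⟩, h⟩
        · exact ⟨insert b (u.erase v₂), ⟨Finset.insert_ne_empty _ _,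
            Or.inr ⟨u, hu, hedgeu, Finset.mem_insert_self _ _, Or.inr subset_rfl⟩⟩, h⟩
      · exact ⟨u, ⟨hfne hu, Or.inl ⟨hu, hedgeu⟩⟩, hxu⟩
  · -- vertices
    ext x
    simp only [SimplicialComplex.vertices, Set.mem_setOf_eq, Set.mem_union, Set.mem_singleton_iff]
    constructor
    · rintro ⟨-, ⟨hf, -⟩ | ⟨s, -, -, hbx, -⟩⟩
      · exact Or.inl hf
      · exact Or.inr (Finset.mem_singleton.1 hbx).symm
    · rintro (hx | rfl)
      · refine ⟨Finset.singleton_ne_empty _, Or.inl ⟨hx, fun hc => ?_⟩⟩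
        have h1 : v₁ = x := Finset.mem_singleton.1 (hc (Finset.mem_insert_self _ _))
        have h2 : v₂ = x := Finset.mem_singleton.1
          (hc (Finset.mem_insert_of_mem (Finset.mem_singleton_self _)))
        exact hne (h1.trans h2.symm)
      · refine ⟨Finset.singleton_ne_empty _, Or.inr ⟨{v₁, v₂}, hedge, subset_rfl,
          Finset.mem_singleton_self _, Or.inl ?_⟩⟩
        exact Finset.singleton_subset_iff.2 (Finset.mem_insert_self _ _)
  · -- old faces
    intro s hs hnsub
    exact ⟨hfne hs, Or.inl ⟨hs, hnsub⟩⟩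
  · -- new faces
    intro s hs hsub
    exact ⟨⟨Finset.insert_ne_empty _ _,
        Or.inr ⟨s, hs, hsub, Finset.mem_insert_self _ _, Or.inl subset_rfl⟩⟩,
      ⟨Finset.insert_ne_empty _ _,
        Or.inr ⟨s, hs, hsub, Finset.mem_insert_self _ _, Or.inr subset_rfl⟩⟩⟩
  · -- characterization
    rintro t ⟨-, ⟨htf, htnet⟩ | ⟨s, hs, hesub, -, hsub⟩⟩
    · exact Or.inl ⟨htf, htnet⟩
    · exact Or.inr ⟨s, hs, hesub, hsub⟩
end

section
/- Let $d, m \geq 1$ and let $H$ be a finite $d$-partite hypergraph on vertex set $[m] \times [d]$ (with parts $[m] \times \{j\}$ for $j \in [d]$, each edge meeting each part exactly once) that admits a perfect fractional matching. If $d \geq 2$, then $H$ has a matching of size at least $\frac{m}{d-1}$. -/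
open Finset


variable {m d : ℕ}

noncomputable def ppfmRsum (G : Finset (Finset (Fin m × Fin d)))
    (h : Finset (Fin m × Fin d) → ℝ) (v : Fin m × Fin d) : ℝ :=
  ∑ e ∈ G.filter (fun e => v ∈ e), h e

lemma ppfm_card_of_partite' {e : Finset (Fin m × Fin d)}
    (he : ∀ j : Fin d, (e.filter (fun v => v.2 = j)).card = 1) : e.card = d := by
  have h : e.card = ∑ j : Fin d, (e.filter (fun v => v.2 = j)).card :=
    card_eq_sum_card_fiberwise (fun v _ => mem_univ v.2)
  simp [h, he]

lemma ppfm_exists_good (hd : 2 ≤ d) (G : Finset (Finset (Fin m × Fin d)))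
    (hG : ∀ e ∈ G, ∀ j : Fin d, (e.filter (fun v => v.2 = j)).card = 1)
    (g : Finset (Fin m × Fin d) → ℝ) (hg0 : ∀ e ∈ G, 0 ≤ g e)
    (hg1 : ∀ v, ppfmRsum G g v ≤ 1) (hpos : 0 < ∑ e ∈ G, g e) :
    ∃ h : Finset (Fin m × Fin d) → ℝ, (∀ e ∈ G, 0 ≤ h e) ∧ (∀ v, ppfmRsum G h v ≤ 1) ∧
      (∑ e ∈ G, g e ≤ ∑ e ∈ G, h e) ∧ ∃ e ∈ G, 1/((d:ℝ)-1) ≤ h e := by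
  classical
  set W := ∑ e ∈ G, g e with hWdef
  set Feas : (Finset (Fin m × Fin d) → ℝ) → Prop := fun h =>
    (∀ e ∈ G, 0 ≤ h e) ∧ (∀ v, ppfmRsum G h v ≤ 1) ∧ W ≤ ∑ e ∈ G, h e with hFeasDef
  set Tof : (Finset (Fin m × Fin d) → ℝ) → Finset (Fin m × Fin d) := fun h =>
    Finset.univ.filter (fun v => ppfmRsum G h v = 1) with hTofDef
  set Sof : (Finset (Fin m × Fin d) → ℝ) → Finset (Finset (Fin m × Fin d)) := fun h =>
    G.filter (fun e => h e ≠ 0) with hSofDef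
  have hgFeas : Feas g := ⟨hg0, hg1, le_refl _⟩
  set A : Set ℕ := {k | ∃ h, Feas h ∧ (Tof h).card = k} with hAdef
  have hAne : A.Nonempty := ⟨_, g, hgFeas, rfl⟩
  have hAbdd : BddAbove A := by
    refine ⟨Fintype.card (Fin m × Fin d), ?_⟩
    rintro k ⟨h, -, rfl⟩
    exact le_trans (card_filter_le _ _) (by simp)
  obtain ⟨h₁, h₁F, h₁T⟩ := Nat.sSup_mem hAne hAbdd
  set α := sSup A with hαdef
  set B : Set ℕ := {k | ∃ h, Feas h ∧ (Tof h).card = α ∧ (Sof h).card = k} with hBdef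
  have hBne : B.Nonempty := ⟨_, h₁, h₁F, h₁T, rfl⟩
  obtain ⟨h, hF, hTα, hSβ⟩ := Nat.sInf_mem hBne
  set β := sInf B with hβdef
  have optT : ∀ h', Feas h' → (Tof h').card ≤ α := fun h' hf => le_csSup hAbdd ⟨h', hf, rfl⟩
  have optS : ∀ h', Feas h' → (Tof h').card = α → β ≤ (Sof h').card :=
    fun h' hf hT' => Nat.sInf_le ⟨h', hf, hT', rfl⟩
  set T := Tof h with hTdef
  set S := Sof h with hSdef
  have hSsubG : S ⊆ G := filter_subset _ _
  have memS : ∀ e, e ∈ S ↔ e ∈ G ∧ h e ≠ 0 := fun e => mem_filter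
  have memT : ∀ v, v ∈ T ↔ ppfmRsum G h v = 1 := by
    intro v; rw [hTdef]; simp [hTofDef]
  have hF0 : ∀ e ∈ G, 0 ≤ h e := hF.1
  have hF1 : ∀ v, ppfmRsum G h v ≤ 1 := hF.2.1
  have hFW : W ≤ ∑ e ∈ G, h e := hF.2.2
  -- row sums of functions vanishing off S localize to S
  have rsum_loc : ∀ (lam : Finset (Fin m × Fin d) → ℝ), (∀ e ∈ G, e ∉ S → lam e = 0) →
      ∀ v, ppfmRsum G lam v = ∑ e ∈ S.filter (fun e => v ∈ e), lam e := by
    intro lam hlam v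
    rw [ppfmRsum]
    refine (sum_subset (filter_subset_filter _ hSsubG) ?_).symm
    intro e heG heS
    by_cases heS' : e ∈ S
    · exfalso
      exact heS (mem_filter.2 ⟨heS', (mem_filter.1 heG).2⟩)
    · exact hlam e (mem_of_mem_filter _ heG) heS'
  -- the perturbation step
  have key : ∀ lam : Finset (Fin m × Fin d) → ℝ,
      (∀ e, e ∉ S → lam e = 0) →
      (∀ v ∈ T, ppfmRsum G lam v = 0) →
      (0 ≤ ∑ e ∈ G, lam e) →
      (∃ e ∈ S, lam e ≠ 0) → False := by
    intro lam hlam0 hlamT hlamW hex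
    obtain ⟨e0, he0S, he0ne⟩ := hex
    set L : Fin m × Fin d → ℝ := fun v => ppfmRsum G lam v with hLdef
    set Eneg := S.filter (fun e => lam e < 0) with hEnegDef
    set Vpos := Finset.univ.filter (fun v : Fin m × Fin d => 0 < L v) with hVposDef
    set C : Finset ℝ := Eneg.image (fun e => h e / (-(lam e))) ∪
      Vpos.image (fun v => (1 - ppfmRsum G h v) / L v) with hCdef
    have hCne : C.Nonempty := by
      rcases Eneg.eq_empty_or_nonempty with hE | hE
      · -- all lam nonneg; find positive row
        have hlamnn : ∀ e ∈ G, 0 ≤ lam e := by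
          intro e heG
          by_cases heS : e ∈ S
          · rw [hEnegDef, filter_eq_empty_iff] at hE
            exact le_of_not_gt (hE heS)
          · rw [hlam0 e heS]
        have he0pos : 0 < lam e0 := lt_of_le_of_ne (hlamnn e0 (hSsubG he0S)) (Ne.symm he0ne)
        have he0card : e0.card = d := ppfm_card_of_partite' (hG e0 (hSsubG he0S))
        have he0ne' : e0.Nonempty := by rw [← card_pos, he0card]; omega
        obtain ⟨v0, hv0⟩ := he0ne'
        have hv0pos : 0 < L v0 := by
          have hmem : e0 ∈ G.filter (fun e => v0 ∈ e) :=
            mem_filter.2 ⟨hSsubG he0S, hv0⟩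
          have := single_le_sum (f := lam) (fun e he => hlamnn e (mem_of_mem_filter _ he)) hmem
          calc (0:ℝ) < lam e0 := he0pos
            _ ≤ ∑ e ∈ G.filter (fun e => v0 ∈ e), lam e := this
            _ = L v0 := rfl
        refine ⟨(1 - ppfmRsum G h v0) / L v0, ?_⟩
        rw [hCdef]
        exact mem_union_right _ (mem_image_of_mem _ (mem_filter.2 ⟨mem_univ _, hv0pos⟩))
      · obtain ⟨e1, he1⟩ := hE
        exact ⟨h e1 / (-(lam e1)), mem_union_left _ (mem_image_of_mem _ he1)⟩
    set t := C.min' hCne with htdef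
    have hCpos : ∀ x ∈ C, 0 < x := by
      intro x hx
      rw [hCdef, mem_union] at hx
      rcases hx with hx | hx
      · obtain ⟨e1, he1, rfl⟩ := mem_image.1 hx
        rw [hEnegDef, mem_filter] at he1
        have he1S := he1.1
        have hneg := he1.2
        have hpos1 : 0 < h e1 :=
          lt_of_le_of_ne (hF0 e1 (hSsubG he1S)) (Ne.symm ((memS e1).1 he1S).2)
        exact div_pos hpos1 (by linarith)
      · obtain ⟨v1, hv1, rfl⟩ := mem_image.1 hx
        rw [hVposDef, mem_filter] at hv1
        have hLpos := hv1.2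
        have hv1T : v1 ∉ T := by
          intro hc
          have hz : L v1 = 0 := hlamT v1 hc
          rw [hz] at hLpos
          exact lt_irrefl 0 hLpos
        have : ppfmRsum G h v1 < 1 :=
          lt_of_le_of_ne (hF1 v1) (fun hc => hv1T ((memT v1).2 hc))
        exact div_pos (by linarith) hLpos
    have htpos : 0 < t := hCpos _ (min'_mem _ _)
    set h' : Finset (Fin m × Fin d) → ℝ := fun e => h e + t * lam e with h'def
    have hrow' : ∀ v, ppfmRsum G h' v = ppfmRsum G h v + t * L v := by
      intro v
      rw [hLdef]
      simp only [ppfmRsum, h'def]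
      rw [sum_add_distrib, mul_sum]
    have hF'0 : ∀ e ∈ G, 0 ≤ h' e := by
      intro e heG
      rcases le_or_gt 0 (lam e) with hle | hlt
      · have := hF0 e heG
        have : 0 ≤ t * lam e := mul_nonneg htpos.le hle
        simp only [h'def]
        linarith [hF0 e heG]
      · have heS : e ∈ S := by
          by_contra hc
          rw [hlam0 e hc] at hlt
          exact lt_irrefl 0 hlt
        have heE : e ∈ Eneg := mem_filter.2 ⟨heS, hlt⟩
        have hts : t ≤ h e / (-(lam e)) :=
          min'_le _ _ (mem_union_left _ (mem_image_of_mem _ heE))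
        rw [le_div_iff₀ (by linarith : (0:ℝ) < -(lam e))] at hts
        simp only [h'def]
        nlinarith
    have hF'1 : ∀ v, ppfmRsum G h' v ≤ 1 := by
      intro v
      rw [hrow' v]
      rcases le_or_gt (L v) 0 with hle | hlt
      · have : t * L v ≤ 0 := mul_nonpos_of_nonneg_of_nonpos htpos.le hle
        linarith [hF1 v]
      · have hvV : v ∈ Vpos := mem_filter.2 ⟨mem_univ _, hlt⟩
        have hts : t ≤ (1 - ppfmRsum G h v) / L v :=
          min'_le _ _ (mem_union_right _ (mem_image_of_mem _ hvV))
        rw [le_div_iff₀ hlt] at hts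
        linarith
    have hF'W : W ≤ ∑ e ∈ G, h' e := by
      have : ∑ e ∈ G, h' e = ∑ e ∈ G, h e + t * ∑ e ∈ G, lam e := by
        simp only [h'def]
        rw [sum_add_distrib, mul_sum]
      rw [this]
      have : 0 ≤ t * ∑ e ∈ G, lam e := mul_nonneg htpos.le hlamW
      linarith
    have hF' : Feas h' := ⟨hF'0, hF'1, hF'W⟩
    have hTsub : T ⊆ Tof h' := by
      intro v hvT
      have hz : L v = 0 := hlamT v hvT
      have ho : ppfmRsum G h v = 1 := (memT v).1 hvT
      have : ppfmRsum G h' v = 1 := by rw [hrow' v, hz, ho]; ring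
      rw [hTofDef]
      exact mem_filter.2 ⟨mem_univ _, this⟩
    have hTeq : Tof h' = T := by
      refine (eq_of_subset_of_card_le hTsub ?_).symm
      calc (Tof h').card ≤ α := optT h' hF'
        _ = T.card := hTα.symm
    have hSsub' : Sof h' ⊆ S := by
      intro e heS'
      rw [hSofDef, mem_filter] at heS'
      by_contra hc
      have h1 := hlam0 e hc
      have h2 : h e = 0 := by
        by_contra hc2
        exact hc ((memS e).2 ⟨heS'.1, hc2⟩)
      apply heS'.2
      simp only [h'def, h1, h2]
      ring
    have hSeq : Sof h' = S := by
      refine eq_of_subset_of_card_le hSsub' ?_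
      rw [hSβ]
      exact optS h' hF' (by rw [hTeq]; exact hTα)
    -- now derive contradiction from the minimizer
    have htmem2 : t ∈ Eneg.image (fun e => h e / (-(lam e))) ∪
        Vpos.image (fun v => (1 - ppfmRsum G h v) / L v) := min'_mem C hCne
    rcases mem_union.1 htmem2 with hx | hx
    · obtain ⟨e1, he1, heq⟩ := mem_image.1 hx
      rw [hEnegDef, mem_filter] at he1
      have hne : lam e1 ≠ 0 := ne_of_lt he1.2
      have hdiv : h e1 / (-(lam e1)) * lam e1 = -(h e1) := by
        rw [div_mul_eq_mul_div, div_eq_iff (neg_ne_zero.2 hne)]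
        ring
      have hzero : h' e1 = 0 := by
        show h e1 + t * lam e1 = 0
        rw [← heq, hdiv]
        ring
      have : e1 ∈ Sof h' := by rw [hSeq]; exact he1.1
      rw [hSofDef, mem_filter] at this
      exact this.2 hzero
    · obtain ⟨v1, hv1, heq⟩ := mem_image.1 hx
      rw [hVposDef, mem_filter] at hv1
      have hLne : L v1 ≠ 0 := ne_of_gt hv1.2
      have hone : ppfmRsum G h' v1 = 1 := by
        rw [hrow' v1, ← heq, div_mul_cancel₀ _ hLne]
        ring
      have hv1T : v1 ∈ T := by
        rw [← hTeq, hTofDef]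
        exact mem_filter.2 ⟨mem_univ _, hone⟩
      exact hLne (hlamT v1 hv1T)
  -- linear independence of incidence vectors restricted to tight vertices
  set vec : ↥S → (↥T → ℝ) :=
    fun i t => if (t : Fin m × Fin d) ∈ (i : Finset (Fin m × Fin d)) then (1:ℝ) else 0
    with hvecdef
  have lin : LinearIndependent ℝ vec := by
    by_contra hdep
    obtain ⟨c, hcsum, i0, hci0⟩ := Fintype.not_linearIndependent_iff.1 hdep
    have build : ∀ c' : ↥S → ℝ, (∑ i, c' i • vec i = 0) → (∃ i, c' i ≠ 0) →
        (0 ≤ ∑ e ∈ G, (fun e =>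
          if he : e ∈ S then c' ⟨e, he⟩ else 0) e) → False := by
      intro c' hsum hex hW'
      set lam : Finset (Fin m × Fin d) → ℝ :=
        fun e => if he : e ∈ S then c' ⟨e, he⟩ else 0 with hlamdef
      have hlamoff : ∀ e, e ∉ S → lam e = 0 := by
        intro e heS; rw [hlamdef]; exact dif_neg heS
      refine key lam hlamoff ?_ hW' ?_
      · intro v hvT
        rw [rsum_loc lam (fun e _ heS => hlamoff e heS) v]
        have hv : ∑ i : ↥S, c' i * (if (v : Fin m × Fin d) ∈ (i : Finset (Fin m × Fin d))
            then (1:ℝ) else 0) = 0 := by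
          have hev := congrFun hsum ⟨v, hvT⟩
          simpa [hvecdef, Finset.sum_apply, Pi.smul_apply, smul_eq_mul] using hev
        calc ∑ e ∈ S.filter (fun e => v ∈ e), lam e
            = ∑ e ∈ S, (if v ∈ e then lam e else 0) := sum_filter _ _
          _ = ∑ i : ↥S, (if (v : Fin m × Fin d) ∈ (i : Finset (Fin m × Fin d))
                then lam (i : Finset (Fin m × Fin d)) else 0) :=
              (Finset.sum_coe_sort S (fun e => if v ∈ e then lam e else 0)).symm
          _ = ∑ i : ↥S, c' i * (if (v : Fin m × Fin d) ∈ (i : Finset (Fin m × Fin d))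
                then (1:ℝ) else 0) := by
              refine Finset.sum_congr rfl fun i _ => ?_
              have hli : lam (i : Finset (Fin m × Fin d)) = c' i := by
                simp [hlamdef, i.2]
              by_cases hm : (v : Fin m × Fin d) ∈ (i : Finset (Fin m × Fin d)) <;>
                simp [hm, hli]
          _ = 0 := hv
      · obtain ⟨i, hi⟩ := hex
        refine ⟨(i : Finset (Fin m × Fin d)), i.2, ?_⟩
        have hli : lam (i : Finset (Fin m × Fin d)) = c' i := by
          simp [hlamdef, i.2]
        rw [hli]; exact hi
    rcases le_or_gt 0 (∑ e ∈ G, (fun e =>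
        if he : e ∈ S then c ⟨e, he⟩ else 0) e) with hΛ | hΛ
    · exact build c hcsum ⟨i0, hci0⟩ hΛ
    · refine build (-c) ?_ ⟨i0, by simpa using hci0⟩ ?_
      · have : ∑ i, (-c) i • vec i = -∑ i, c i • vec i := by
          rw [← Finset.sum_neg_distrib]
          exact Finset.sum_congr rfl fun i _ => by simp [neg_smul]
        rw [this, hcsum, neg_zero]
      · have hfun : ∀ e, (if he : e ∈ S then (-c) ⟨e, he⟩ else 0)
            = -(if he : e ∈ S then c ⟨e, he⟩ else 0) := by
          intro e; by_cases he : e ∈ S <;> simp [he]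
        simp only [hfun]
        rw [Finset.sum_neg_distrib]
        linarith
  -- final counting argument
  refine ⟨h, hF0, hF1, hFW, ?_⟩
  by_contra hcon
  push_neg at hcon
  have hd1R : (0:ℝ) < (d:ℝ) - 1 := by
    have h2 : (2:ℝ) ≤ (d:ℝ) := by exact_mod_cast hd
    linarith
  have hSne : S.Nonempty := by
    rw [nonempty_iff_ne_empty]
    intro hc
    have hz : ∑ e ∈ G, h e = 0 := by
      refine sum_eq_zero fun e heG => ?_
      by_contra hne
      have : e ∈ S := (memS e).2 ⟨heG, hne⟩
      rw [hc] at this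
      exact notMem_empty _ this
    rw [hz] at hFW
    exact absurd hFW (not_le.2 hpos)
  have hoffS : ∀ e ∈ G, e ∉ S → h e = 0 := by
    intro e heG heS
    by_contra hne
    exact heS ((memS e).2 ⟨heG, hne⟩)
  have hdeg : ∀ v ∈ T, d ≤ (S.filter (fun e => v ∈ e)).card := by
    intro v hvT
    have h1v : ∑ e ∈ S.filter (fun e => v ∈ e), h e = 1 := by
      rw [← rsum_loc h hoffS v]
      exact (memT v).1 hvT
    have hne' : (S.filter (fun e => v ∈ e)).Nonempty := by
      rw [nonempty_iff_ne_empty]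
      intro hc
      rw [hc, sum_empty] at h1v
      norm_num at h1v
    have hlt : (1:ℝ) < ((S.filter (fun e => v ∈ e)).card : ℝ) * (1/((d:ℝ)-1)) := by
      calc (1:ℝ) = ∑ e ∈ S.filter (fun e => v ∈ e), h e := h1v.symm
        _ < ∑ _e ∈ S.filter (fun e => v ∈ e), 1/((d:ℝ)-1) :=
            sum_lt_sum_of_nonempty hne'
              (fun e he => hcon e (hSsubG (mem_of_mem_filter _ he)))
        _ = ((S.filter (fun e => v ∈ e)).card : ℝ) * (1/((d:ℝ)-1)) := by
            rw [sum_const, nsmul_eq_mul]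
    rw [mul_one_div] at hlt
    have hlt2 : (d:ℝ) - 1 < ((S.filter (fun e => v ∈ e)).card : ℝ) :=
      (one_lt_div hd1R).1 hlt
    have hlt3 : (d:ℝ) < ((S.filter (fun e => v ∈ e)).card : ℝ) + 1 := by linarith
    have hlt4 : d < (S.filter (fun e => v ∈ e)).card + 1 := by exact_mod_cast hlt3
    omega
  have hinc : ∑ v ∈ T, (S.filter (fun e => v ∈ e)).card = ∑ e ∈ S, (e ∩ T).card := by
    have l2 : ∀ e : Finset (Fin m × Fin d),
        (e ∩ T).card = ∑ v ∈ T, if v ∈ e then 1 else 0 := by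
      intro e
      rw [inter_comm, ← filter_mem_eq_inter, card_filter]
    have l1 : ∀ v, (S.filter (fun e => v ∈ e)).card = ∑ e ∈ S, if v ∈ e then 1 else 0 :=
      fun v => card_filter _ _
    calc ∑ v ∈ T, (S.filter (fun e => v ∈ e)).card
        = ∑ v ∈ T, ∑ e ∈ S, (if v ∈ e then 1 else 0) := Finset.sum_congr rfl fun v _ => l1 v
      _ = ∑ e ∈ S, ∑ v ∈ T, (if v ∈ e then 1 else 0) := sum_comm
      _ = ∑ e ∈ S, (e ∩ T).card := Finset.sum_congr rfl fun e _ => (l2 e).symm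
  have hcardST : S.card ≤ T.card := by
    have h1 := lin.fintype_card_le_finrank
    rwa [Module.finrank_fintype_fun_eq_card ℝ, Fintype.card_coe, Fintype.card_coe] at h1
  have hecards : ∀ e ∈ S, e.card = d := fun e heS => ppfm_card_of_partite' (hG e (hSsubG heS))
  have hTcount : d * T.card ≤ ∑ v ∈ T, (S.filter (fun e => v ∈ e)).card := by
    calc d * T.card = ∑ _v ∈ T, d := by rw [sum_const, smul_eq_mul, Nat.mul_comm]
      _ ≤ ∑ v ∈ T, (S.filter (fun e => v ∈ e)).card := sum_le_sum hdeg
  have hScount : ∑ e ∈ S, (e ∩ T).card ≤ d * S.card := by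
    calc ∑ e ∈ S, (e ∩ T).card ≤ ∑ e ∈ S, d := by
          refine sum_le_sum fun e heS => ?_
          calc (e ∩ T).card ≤ e.card := card_le_card inter_subset_left
            _ = d := hecards e heS
      _ = d * S.card := by rw [sum_const, smul_eq_mul, Nat.mul_comm]
  have hdpos : 0 < d := by omega
  have hST : T.card = S.card := by
    have h1 : d * T.card ≤ d * S.card := by
      calc d * T.card ≤ ∑ v ∈ T, (S.filter (fun e => v ∈ e)).card := hTcount
        _ = ∑ e ∈ S, (e ∩ T).card := hinc
        _ ≤ d * S.card := hScount
    have h2 : T.card ≤ S.card := Nat.le_of_mul_le_mul_left h1 hdpos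
    omega
  have hge : d * S.card ≤ ∑ e ∈ S, (e ∩ T).card := by
    rw [← hST] at *
    calc d * T.card ≤ ∑ v ∈ T, (S.filter (fun e => v ∈ e)).card := hTcount
      _ = ∑ e ∈ S, (e ∩ T).card := hinc
  have hsubT : ∀ e ∈ S, e ⊆ T := by
    intro e heS
    by_contra hc
    have hssub : e ∩ T ⊂ e := by
      refine Finset.ssubset_iff_of_subset inter_subset_left |>.2 ?_
      rw [not_subset] at hc
      obtain ⟨v, hve, hvT⟩ := hc
      exact ⟨v, hve, fun hmem => hvT (mem_of_mem_inter_right hmem)⟩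
    have hcardlt : (e ∩ T).card < e.card := card_lt_card hssub
    have hstrict : ∑ e' ∈ S, (e' ∩ T).card < ∑ e' ∈ S, e'.card := by
      refine Finset.sum_lt_sum (fun e' he' => card_le_card inter_subset_left) ⟨e, heS, hcardlt⟩
    have heq2 : ∑ e' ∈ S, e'.card = d * S.card := by
      calc ∑ e' ∈ S, e'.card = ∑ _e' ∈ S, d := Finset.sum_congr rfl hecards
        _ = d * S.card := by rw [sum_const, smul_eq_mul, Nat.mul_comm]
    omega
  -- build the vanishing functional
  set j0 : Fin d := ⟨0, by omega⟩ with hj0def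
  set j1 : Fin d := ⟨1, by omega⟩ with hj1def
  have hj01 : j1 ≠ j0 := by
    rw [hj0def, hj1def]
    intro hc
    have := Fin.mk.injEq 1 (by omega : 1 < d) 0 (by omega : 0 < d) ▸ hc
    simp [Fin.ext_iff] at hc
  set ε : Fin m × Fin d → ℝ :=
    fun v => if v.2 = j0 then 1 else if v.2 = j1 then -1 else 0 with hεdef
  haveI hSnei : Nonempty ↥S := ⟨⟨hSne.choose, hSne.choose_spec⟩⟩
  have hcardEq : Fintype.card ↥S = Module.finrank ℝ (↥T → ℝ) := by
    rw [Module.finrank_fintype_fun_eq_card ℝ, Fintype.card_coe, Fintype.card_coe, hST]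
  set b := basisOfLinearIndependentOfCardEqFinrank lin hcardEq with hbdef
  set φ : (↥T → ℝ) →ₗ[ℝ] ℝ :=
    ∑ t : ↥T, ε (t : Fin m × Fin d) • LinearMap.proj t with hφdef
  have hφapp : ∀ x : ↥T → ℝ, φ x = ∑ t : ↥T, ε (t : Fin m × Fin d) * x t := by
    intro x
    rw [hφdef]
    simp [LinearMap.sum_apply, LinearMap.smul_apply, LinearMap.proj_apply, smul_eq_mul]
  have hεsum : ∀ e ∈ S, ∑ v ∈ e, ε v = 0 := by
    intro e heS
    have hcard0 : (e.filter (fun v => v.2 = j0)).card = 1 := hG e (hSsubG heS) j0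
    have hcard1 : (e.filter (fun v => v.2 = j1)).card = 1 := hG e (hSsubG heS) j1
    rw [← sum_filter_add_sum_filter_not e (fun v => v.2 = j0) ε]
    have hA : ∑ v ∈ e.filter (fun v => v.2 = j0), ε v = 1 := by
      have : ∀ v ∈ e.filter (fun v => v.2 = j0), ε v = 1 := by
        intro v hv
        rw [hεdef]
        simp [(mem_filter.1 hv).2]
      rw [Finset.sum_congr rfl this, sum_const, hcard0]
      simp
    have hB : ∑ v ∈ e.filter (fun v => ¬ v.2 = j0), ε v = -1 := by
      have heq : ∀ v ∈ e.filter (fun v => ¬ v.2 = j0), ε v = if v.2 = j1 then (-1:ℝ) else 0 := by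
        intro v hv
        rw [hεdef]
        simp [(mem_filter.1 hv).2]
      rw [Finset.sum_congr rfl heq, ← sum_filter, filter_filter]
      have hfeq : e.filter (fun v => ¬ v.2 = j0 ∧ v.2 = j1) = e.filter (fun v => v.2 = j1) := by
        refine filter_congr fun v _ => ?_
        constructor
        · exact fun hv => hv.2
        · intro hv
          exact ⟨by rw [hv]; exact hj01, hv⟩
      rw [hfeq, sum_const, hcard1]
      simp
    rw [hA, hB]
    ring
  have hφvec : ∀ i : ↥S, φ (vec i) = 0 := by
    intro i
    rw [hφapp]
    have hterm : ∀ t : ↥T, ε (t : Fin m × Fin d) * vec i t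
        = if (t : Fin m × Fin d) ∈ (i : Finset (Fin m × Fin d))
            then ε (t : Fin m × Fin d) else 0 := by
      intro t
      rw [hvecdef]
      by_cases hmem : (t : Fin m × Fin d) ∈ (i : Finset (Fin m × Fin d)) <;> simp [hmem]
    rw [Finset.sum_congr rfl fun t _ => hterm t]
    rw [Finset.sum_coe_sort T
      (fun v => if v ∈ (i : Finset (Fin m × Fin d)) then ε v else 0)]
    rw [← sum_filter]
    have hTe : T.filter (fun v => v ∈ (i : Finset (Fin m × Fin d)))
        = (i : Finset (Fin m × Fin d)) := by
      ext v
      rw [mem_filter]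
      constructor
      · exact fun hv => hv.2
      · exact fun hv => ⟨hsubT _ i.2 hv, hv⟩
    rw [hTe]
    exact hεsum _ i.2
  have hφ0 : φ = 0 := by
    refine b.ext fun i => ?_
    have hbi : b i = vec i := by
      rw [hbdef, coe_basisOfLinearIndependentOfCardEqFinrank]
    rw [hbi, hφvec i]
    simp
  obtain ⟨e0, he0S⟩ := hSne
  have hfe0 : (e0.filter (fun v => v.2 = j0)).Nonempty := by
    rw [← card_pos, hG e0 (hSsubG he0S) j0]
    omega
  obtain ⟨v0, hv0⟩ := hfe0
  rw [mem_filter] at hv0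
  have hv0T : v0 ∈ T := hsubT e0 he0S hv0.1
  set ind : ↥T → ℝ := Pi.single (⟨v0, hv0T⟩ : ↥T) (1:ℝ) with hinddef
  have hone : φ ind = 1 := by
    rw [hφapp]
    have hterm : ∀ t : ↥T, ε (t : Fin m × Fin d) * ind t
        = if t = (⟨v0, hv0T⟩ : ↥T) then ε (t : Fin m × Fin d) else 0 := by
      intro t
      rcases eq_or_ne t (⟨v0, hv0T⟩ : ↥T) with rfl | hne
      · simp [hinddef]
      · simp [hinddef, Pi.single_eq_of_ne hne, hne]
    rw [Finset.sum_congr rfl fun t _ => hterm t]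
    rw [Finset.sum_ite_eq' Finset.univ (⟨v0, hv0T⟩ : ↥T) (fun t => ε (t : Fin m × Fin d))]
    rw [if_pos (mem_univ _), hεdef]
    simp [hv0.2]
  rw [hφ0] at hone
  simp at hone

lemma ppfm_sum_mul_inter (G : Finset (Finset (Fin m × Fin d)))
    (h : Finset (Fin m × Fin d) → ℝ) (e : Finset (Fin m × Fin d)) :
    ∑ e' ∈ G, h e' * ((e' ∩ e).card : ℝ) = ∑ v ∈ e, ppfmRsum G h v := by
  have key : ∀ e' : Finset (Fin m × Fin d),
      ((e' ∩ e).card : ℝ) = ∑ v ∈ e, if v ∈ e' then (1:ℝ) else 0 := by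
    intro e'
    rw [inter_comm, ← filter_mem_eq_inter, card_filter]
    push_cast
    simp
  calc ∑ e' ∈ G, h e' * ((e' ∩ e).card : ℝ)
      = ∑ e' ∈ G, ∑ v ∈ e, (if v ∈ e' then h e' else 0) := by
        refine sum_congr rfl fun e' _ => ?_
        rw [key, mul_sum]
        exact sum_congr rfl fun v _ => by split <;> simp
    _ = ∑ v ∈ e, ∑ e' ∈ G, (if v ∈ e' then h e' else 0) := sum_comm
    _ = ∑ v ∈ e, ppfmRsum G h v := by
        refine sum_congr rfl fun v _ => ?_
        rw [ppfmRsum, sum_filter]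

lemma ppfm_nbhd (hd : 2 ≤ d) (G : Finset (Finset (Fin m × Fin d)))
    (hG : ∀ e ∈ G, ∀ j : Fin d, (e.filter (fun v => v.2 = j)).card = 1)
    (h : Finset (Fin m × Fin d) → ℝ) (h0 : ∀ e ∈ G, 0 ≤ h e)
    (h1 : ∀ v, ppfmRsum G h v ≤ 1) {e : Finset (Fin m × Fin d)} (heG : e ∈ G) :
    ∑ e' ∈ G.filter (fun e' => ¬ Disjoint e' e), h e' ≤ (d:ℝ) - ((d:ℝ)-1) * h e := by
  classical
  have hecard : e.card = d := ppfm_card_of_partite' (hG e heG)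
  have hene : e.Nonempty := by
    rw [← card_pos, hecard]; omega
  set A := G.filter (fun e' => ¬ Disjoint e' e) with hA
  have heA : e ∈ A := by
    simp only [hA, mem_filter]
    refine ⟨heG, fun hdisj => ?_⟩
    rw [disjoint_self] at hdisj
    exact hene.ne_empty hdisj
  have step1 : ∑ e' ∈ A, h e' + ((d:ℝ)-1) * h e ≤ ∑ e' ∈ A, h e' * ((e' ∩ e).card : ℝ) := by
    rw [← Finset.add_sum_erase A _ heA, ← Finset.add_sum_erase A (fun e' => h e' * _) heA]
    have h1' : h e * ((e ∩ e).card : ℝ) = (d:ℝ) * h e := by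
      rw [inter_self, hecard]; ring
    have : ∀ e' ∈ A.erase e, h e' ≤ h e' * ((e' ∩ e).card : ℝ) := by
      intro e' he'
      have he'A := mem_of_mem_erase he'
      have he'G : e' ∈ G := mem_of_mem_filter _ he'A
      have hnd : ¬ Disjoint e' e := (mem_filter.1 he'A).2
      have : (e' ∩ e).Nonempty := not_disjoint_iff_nonempty_inter.1 hnd
      have hc : (1:ℝ) ≤ ((e' ∩ e).card : ℝ) := by
        exact_mod_cast card_pos.2 this
      exact le_mul_of_one_le_right (h0 e' he'G) hc
    calc h e + ∑ e' ∈ A.erase e, h e' + ((d:ℝ)-1) * h e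
        = (d:ℝ) * h e + ∑ e' ∈ A.erase e, h e' := by ring
      _ ≤ h e * ((e ∩ e).card : ℝ) + ∑ e' ∈ A.erase e, h e' * ((e' ∩ e).card : ℝ) := by
          rw [h1']
          exact add_le_add (le_refl _) (sum_le_sum this)
  have step2 : ∑ e' ∈ A, h e' * ((e' ∩ e).card : ℝ) ≤ ∑ e' ∈ G, h e' * ((e' ∩ e).card : ℝ) := by
    refine sum_le_sum_of_subset_of_nonneg (filter_subset _ _) ?_
    intro e' he'G _
    exact mul_nonneg (h0 e' he'G) (by positivity)
  have step3 : ∑ e' ∈ G, h e' * ((e' ∩ e).card : ℝ) ≤ (d:ℝ) := by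
    rw [ppfm_sum_mul_inter]
    calc ∑ v ∈ e, ppfmRsum G h v ≤ ∑ v ∈ e, 1 := sum_le_sum fun v _ => h1 v
      _ = (d:ℝ) := by simp [hecard]
  linarith

lemma ppfm_thmA (hd : 2 ≤ d) :
    ∀ (n : ℕ) (G : Finset (Finset (Fin m × Fin d))), G.card < n →
    (∀ e ∈ G, ∀ j : Fin d, (e.filter (fun v => v.2 = j)).card = 1) →
    ∀ g : Finset (Fin m × Fin d) → ℝ, (∀ e ∈ G, 0 ≤ g e) → (∀ v, ppfmRsum G g v ≤ 1) →
    ∃ M : Finset (Finset (Fin m × Fin d)), M ⊆ G ∧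
      (↑M : Set (Finset (Fin m × Fin d))).Pairwise (fun a b => Disjoint a b) ∧
      ∑ e ∈ G, g e ≤ ((d:ℝ)-1) * M.card := by
  classical
  intro n
  induction n with
  | zero => intro G hcard; omega
  | succ n ih =>
    intro G hcard hG g hg0 hg1
    rcases le_or_gt (∑ e ∈ G, g e) 0 with hW | hW
    · exact ⟨∅, empty_subset _, by simp [Set.Pairwise], by simpa using hW⟩
    · obtain ⟨h, h0, h1, hge, e, heG, hebig⟩ := ppfm_exists_good hd G hG g hg0 hg1 hW
      have hd1 : (0:ℝ) < (d:ℝ) - 1 := by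
        have : (2:ℝ) ≤ (d:ℝ) := by exact_mod_cast hd
        linarith
      set G' := G.filter (fun e' => Disjoint e' e) with hG'
      have hsub : G' ⊆ G := filter_subset _ _
      have hene : e.Nonempty := by
        have := ppfm_card_of_partite' (hG e heG)
        rw [← card_pos, this]; omega
      have heG' : e ∉ G' := by
        simp only [hG', mem_filter]
        rintro ⟨-, hdisj⟩
        rw [disjoint_self] at hdisj
        exact hene.ne_empty hdisj
      have hcard' : G'.card < n := by
        have : G'.card < G.card := card_lt_card ⟨hsub, fun hc => heG' (hc heG)⟩
        omega
      have hG'p : ∀ e' ∈ G', ∀ j : Fin d, (e'.filter (fun v => v.2 = j)).card = 1 :=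
        fun e' he' => hG e' (hsub he')
      have h0' : ∀ e' ∈ G', 0 ≤ h e' := fun e' he' => h0 e' (hsub he')
      have h1' : ∀ v, ppfmRsum G' h v ≤ 1 := by
        intro v
        refine le_trans ?_ (h1 v)
        unfold ppfmRsum
        refine sum_le_sum_of_subset_of_nonneg (filter_subset_filter _ hsub) ?_
        intro e' he' _
        exact h0 e' (mem_of_mem_filter _ he')
      obtain ⟨M', hM'sub, hM'pair, hM'card⟩ := ih G' hcard' hG'p h h0' h1'
      have heM' : e ∉ M' := fun hc => heG' (hM'sub hc)
      refine ⟨insert e M', ?_, ?_, ?_⟩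
      · intro x hx
        rcases mem_insert.1 hx with rfl | hx
        · exact heG
        · exact hsub (hM'sub hx)
      · rw [coe_insert]
        haveI : Std.Symm (fun a b : Finset (Fin m × Fin d) => Disjoint a b) :=
          ⟨fun a b hab => Disjoint.symm hab⟩
        refine Set.Pairwise.insert_of_symm hM'pair ?_
        intro e' he'M hne
        exact ((mem_filter.1 (hM'sub he'M)).2).symm
      · have hsplit : ∑ e' ∈ G', h e' + ∑ e' ∈ G.filter (fun e' => ¬ Disjoint e' e), h e'
            = ∑ e' ∈ G, h e' := sum_filter_add_sum_filter_not G _ h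
        have hnb := ppfm_nbhd hd G hG h h0 h1 heG
        have hbig : (1:ℝ) ≤ ((d:ℝ)-1) * h e := by
          rw [div_le_iff₀ hd1] at hebig
          linarith [hebig]
        have hcardM : ((insert e M').card : ℝ) = (M'.card : ℝ) + 1 := by
          rw [card_insert_of_notMem heM']; push_cast; ring
        calc ∑ e' ∈ G, g e' ≤ ∑ e' ∈ G, h e' := hge
          _ = ∑ e' ∈ G', h e' + ∑ e' ∈ G.filter (fun e' => ¬ Disjoint e' e), h e' := hsplit.symm
          _ ≤ ((d:ℝ)-1) * M'.card + ((d:ℝ) - ((d:ℝ)-1) * h e) := add_le_add hM'card hnb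
          _ ≤ ((d:ℝ)-1) * M'.card + ((d:ℝ) - 1) := by linarith
          _ = ((d:ℝ)-1) * ((insert e M').card : ℝ) := by rw [hcardM]; ring


/-- A `d`-partite hypergraph on `[m] × [d]` with a perfect fractional matching has a
matching of size at least `m / (d - 1)` when `d ≥ 2`. -/
theorem partite_perfect_fractional_matching (m d : ℕ) (hm : 1 ≤ m) (hd : 2 ≤ d)
    (E : Finset (Finset (Fin m × Fin d)))
    (hE : ∀ e ∈ E, ∀ j : Fin d, (e.filter (fun v => v.2 = j)).card = 1)
    (f : Finset (Fin m × Fin d) → ℝ) (hf0 : ∀ e ∈ E, 0 ≤ f e)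
    (hperfect : ∀ v : Fin m × Fin d, ∑ e ∈ E.filter (fun e => v ∈ e), f e = 1) :
    ∃ M : Finset (Finset (Fin m × Fin d)), M ⊆ E ∧
      (↑M : Set (Finset (Fin m × Fin d))).Pairwise (fun a b => Disjoint a b) ∧
      (m : ℝ) / ((d : ℝ) - 1) ≤ M.card := by
  classical
  have hd0 : 0 < d := by omega
  set j0 : Fin d := ⟨0, by omega⟩ with hj0
  -- total weight equals m
  have hW : ∑ e ∈ E, f e = (m : ℝ) := by
    have h1 : ∀ e ∈ E, (f e) = ∑ i : Fin m, (if (i, j0) ∈ e then f e else 0) := by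
      intro e he
      have hcount : (Finset.univ.filter (fun i : Fin m => (i, j0) ∈ e)).card
          = (e.filter (fun v => v.2 = j0)).card := by
        refine card_bij' (fun i _ => (i, j0)) (fun v _ => v.1) ?_ ?_ ?_ ?_
        · intro i hi
          rw [mem_filter] at hi ⊢
          exact ⟨hi.2, rfl⟩
        · intro v hv
          rw [mem_filter] at hv
          refine mem_filter.2 ⟨mem_univ _, ?_⟩
          have hveq : ((v.1, j0) : Fin m × Fin d) = v := by rw [← hv.2]
          rw [hveq]
          exact hv.1
        · intro i hi; rfl
        · intro v hv
          rw [mem_filter] at hv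
          show ((v.1, j0) : Fin m × Fin d) = v
          rw [← hv.2]
      calc f e = f e * ((e.filter (fun v => v.2 = j0)).card : ℝ) := by
            rw [hE e he j0]; ring
        _ = f e * ((Finset.univ.filter (fun i : Fin m => (i, j0) ∈ e)).card : ℝ) := by
            rw [hcount]
        _ = ∑ i : Fin m, (if (i, j0) ∈ e then f e else 0) := by
            rw [card_filter]
            push_cast
            rw [mul_sum]
            refine sum_congr rfl fun i _ => ?_
            split <;> simp
    calc ∑ e ∈ E, f e = ∑ e ∈ E, ∑ i : Fin m, (if (i, j0) ∈ e then f e else 0) :=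
          sum_congr rfl h1
      _ = ∑ i : Fin m, ∑ e ∈ E, (if (i, j0) ∈ e then f e else 0) := sum_comm
      _ = ∑ i : Fin m, ∑ e ∈ E.filter (fun e => (i, j0) ∈ e), f e := by
          refine sum_congr rfl fun i _ => ?_
          rw [sum_filter]
      _ = ∑ i : Fin m, (1:ℝ) := sum_congr rfl fun i _ => hperfect (i, j0)
      _ = (m:ℝ) := by simp
  have hg1 : ∀ v, ppfmRsum E f v ≤ 1 := fun v => le_of_eq (hperfect v)
  obtain ⟨M, hMsub, hMpair, hMcard⟩ :=
    ppfm_thmA hd (E.card + 1) E (Nat.lt_succ_self _) hE f hf0 hg1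
  refine ⟨M, hMsub, hMpair, ?_⟩
  have hd1 : (0:ℝ) < (d:ℝ) - 1 := by
    have : (2:ℝ) ≤ (d:ℝ) := by exact_mod_cast hd
    linarith
  rw [div_le_iff₀ hd1]
  rw [hW] at hMcard
  linarith
end
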